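/- Let X be a Banach space and (x_i) a normalized weakly null basic sequence in X which has a spreading model (x̃_i) not equivalent to the unit vector basis of ℓ₁. Then for every sequence (δ_n)_{n ≥ 2} ⊂ (0,1) there exist a subsequence (x_{m_i}) of (x_i), an increasing sequence of integers M_1 < M_2 < ⋯, and δ_1 > 0 such that for all finitely supported scalars (a_i) one has ‖Σ_i a_i x_{m_i}‖ ≤ sup_{n ∈ ℕ} δ_n ‖(a_i)‖_{ℓ₁(𝒢_n)}, where 𝒢_n = {G ⊆ ℕ : |G| ≤ M_n}. -/

import Mathlib

open scoped BigOperators ENNReal NNReal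
open Filter

noncomputable section

/-- `x` is a basic sequence: all terms are nonzero and there is a uniform bound on the
norms of the partial-sum projections. -/
def IsBasicSeq {X : Type*} [NormedAddCommGroup X] [NormedSpace ℝ X] (x : ℕ → X) : Prop :=
  (∀ i, x i ≠ 0) ∧
  ∃ K : ℝ, 1 ≤ K ∧ ∀ (a : ℕ → ℝ) (m n : ℕ), m ≤ n →
    ‖∑ i ∈ Finset.range m, a i • x i‖ ≤ K * ‖∑ i ∈ Finset.range n, a i • x i‖

def IsNormalizedSeq {X : Type*} [NormedAddCommGroup X] (x : ℕ → X) : Prop := ∀ i, ‖x i‖ = 1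

def IsSeminormalizedSeq {X : Type*} [NormedAddCommGroup X] (x : ℕ → X) : Prop :=
  ∃ c C : ℝ, 0 < c ∧ ∀ i, c ≤ ‖x i‖ ∧ ‖x i‖ ≤ C

def IsWeaklyNull {X : Type*} [NormedAddCommGroup X] [NormedSpace ℝ X] (x : ℕ → X) : Prop :=
  ∀ f : X →L[ℝ] ℝ, Tendsto (fun i => f (x i)) atTop (nhds 0)

/-- `x` `C`-dominates `y`. -/
def DominatesWith {X Y : Type*} [NormedAddCommGroup X] [NormedSpace ℝ X]
    [NormedAddCommGroup Y] [NormedSpace ℝ Y] (C : ℝ) (x : ℕ → X) (y : ℕ → Y) : Prop :=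
  ∀ (n : ℕ) (a : ℕ → ℝ),
    ‖∑ i ∈ Finset.range n, a i • y i‖ ≤ C * ‖∑ i ∈ Finset.range n, a i • x i‖

def Dominates {X Y : Type*} [NormedAddCommGroup X] [NormedSpace ℝ X]
    [NormedAddCommGroup Y] [NormedSpace ℝ Y] (x : ℕ → X) (y : ℕ → Y) : Prop :=
  ∃ C : ℝ, 1 ≤ C ∧ DominatesWith C x y

def EquivSeqs {X Y : Type*} [NormedAddCommGroup X] [NormedSpace ℝ X]
    [NormedAddCommGroup Y] [NormedSpace ℝ Y] (x : ℕ → X) (y : ℕ → Y) : Prop :=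
  Dominates x y ∧ Dominates y x

/-- `xt` (a sequence in `Y`) is a spreading model of the sequence `x` of `X`. -/
def IsSpreadingModelOf {X Y : Type*} [NormedAddCommGroup X] [NormedSpace ℝ X]
    [NormedAddCommGroup Y] [NormedSpace ℝ Y] (x : ℕ → X) (xt : ℕ → Y) : Prop :=
  IsBasicSeq xt ∧ ∃ ε : ℕ → ℝ, (∀ n, 0 < ε n) ∧ Antitone ε ∧ Tendsto ε atTop (nhds 0) ∧
    ∀ (n : ℕ) (a : Fin n → ℝ), (∀ i, |a i| ≤ 1) →
      ∀ k : Fin n → ℕ, StrictMono k → (∀ i, n ≤ k i) →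
        |‖∑ i, a i • x (k i)‖ - ‖∑ i, a i • xt (i : ℕ)‖| < ε n

/-- the `ℓ_p`-norm of a finite vector of reals (`p = ∞` giving the sup norm). -/
def lpNormFin (p : ℝ≥0∞) {n : ℕ} (a : Fin n → ℝ) : ℝ :=
  if p = ⊤ then ⨆ i, |a i| else (∑ i, |a i| ^ p.toReal) ^ (1 / p.toReal)

/-- `x` is equivalent to the unit vector basis of `ℓ_p` (of `c₀` if `p = ∞`). -/
def EquivToLpBasis {Y : Type*} [NormedAddCommGroup Y] [NormedSpace ℝ Y]
    (p : ℝ≥0∞) (x : ℕ → Y) : Prop :=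
  ∃ C : ℝ, 1 ≤ C ∧ ∀ (n : ℕ) (a : Fin n → ℝ),
    lpNormFin p a ≤ C * ‖∑ i, a i • x (i : ℕ)‖ ∧
    ‖∑ i, a i • x (i : ℕ)‖ ≤ C * lpNormFin p a

/-- `p` belongs to the Krivine set of the sequence `x`. -/
def InKrivineSet {Y : Type*} [NormedAddCommGroup Y] [NormedSpace ℝ Y]
    (p : ℝ≥0∞) (x : ℕ → Y) : Prop :=
  ∀ ε : ℝ, 0 < ε → ∀ n : ℕ, ∃ m : ℕ, 0 < m ∧ ∃ lam : Fin m → ℝ, ∀ a : Fin n → ℝ,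
    (1 + ε)⁻¹ * lpNormFin p a ≤
        ‖∑ i : Fin n, a i • ∑ k : Fin m, lam k • x ((i : ℕ) * m + (k : ℕ))‖ ∧
    ‖∑ i : Fin n, a i • ∑ k : Fin m, lam k • x ((i : ℕ) * m + (k : ℕ))‖ ≤ (1 + ε) * lpNormFin p a

/-- `y` is a block basis of `e`. -/
def IsBlockBasis {X : Type*} [NormedAddCommGroup X] [NormedSpace ℝ X]
    (e y : ℕ → X) : Prop :=
  ∃ (q : ℕ → ℕ) (c : ℕ → ℝ), StrictMono q ∧ (∀ j, y j ≠ 0) ∧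
    ∀ j, y j = ∑ i ∈ Finset.Ico (q j) (q (j + 1)), c i • e i

/-- `‖(a_i)‖_{ℓ₁(𝒢)}` where `𝒢 = {G ⊆ ℕ : |G| ≤ M}`. -/
def ell1G (M : ℕ) (a : ℕ →₀ ℝ) : ℝ :=
  sSup {t | ∃ G : Finset ℕ, G.card ≤ M ∧ t = ∑ i ∈ G, |a i|}

namespace St18

variable {X Y : Type*} [NormedAddCommGroup X] [NormedSpace ℝ X]
  [NormedAddCommGroup Y] [NormedSpace ℝ Y]

/-- norm of partial sum of the spreading model sequence -/
def Vv (xt : ℕ → Y) (m : ℕ) (b : ℕ → ℝ) : ℝ := ‖∑ i ∈ Finset.range m, b i • xt i‖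

section SM

variable (x : ℕ → X) (xt : ℕ → Y) (ε : ℕ → ℝ)

def SP : Prop :=
  ∀ (n : ℕ) (a : Fin n → ℝ), (∀ i, |a i| ≤ 1) →
    ∀ k : Fin n → ℕ, StrictMono k → (∀ i, n ≤ k i) →
      |‖∑ i, a i • x (k i)‖ - ‖∑ i, a i • xt (i : ℕ)‖| < ε n

variable {x xt ε}

lemma lemT (hsp : SP x xt ε) (m N : ℕ) (hm : m ≤ N) (b : ℕ → ℝ)
    (hb : ∀ i < m, |b i| ≤ 1) (k : ℕ → ℕ)
    (hk : ∀ ⦃i j : ℕ⦄, i < j → j < m → k i < k j) (hkN : ∀ i < m, N ≤ k i) :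
    |‖∑ i ∈ Finset.range m, b i • x (k i)‖ - Vv xt m b| < ε N := by
  classical
  set base : ℕ := N + (if m = 0 then 0 else k (m - 1) + 1) with hbase
  have hbaseN : N ≤ base := Nat.le_add_right _ _
  have hbasek : ∀ i < m, k i < base := by
    intro i hi
    have hm0 : m ≠ 0 := by omega
    have : k i ≤ k (m - 1) := by
      rcases lt_or_eq_of_le (Nat.le_sub_one_of_lt hi) with h | h
      · exact le_of_lt (hk h (Nat.sub_lt (Nat.pos_of_ne_zero hm0) one_pos))
      · exact h ▸ le_rfl
    calc k i ≤ k (m - 1) := this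
      _ < base := by simp [hbase, hm0]; omega
  set aN : Fin N → ℝ := fun j => if (j : ℕ) < m then b j else 0 with haN
  set kN : Fin N → ℕ := fun j => if (j : ℕ) < m then k j else base + ((j : ℕ) - m) with hkN'
  have haNb : ∀ j : Fin N, |aN j| ≤ 1 := by
    intro j; simp only [haN]
    split
    · exact hb _ ‹_›
    · simp
  have hkNmono : StrictMono kN := by
    intro i j hij
    simp only [hkN']
    rcases lt_or_ge (j : ℕ) m with hj | hj
    · have hi : (i : ℕ) < m := lt_trans hij hj
      simp [hi, hj]; exact hk hij hj
    · rcases lt_or_ge (i : ℕ) m with hi | hi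
      · simp only [hi, if_pos, hj.not_gt, if_neg, not_false_iff]
        exact lt_of_lt_of_le (hbasek _ hi) (Nat.le_add_right _ _)
      · simp only [hi.not_gt, hj.not_gt, if_neg, not_false_iff]
        have : (i : ℕ) - m < (j : ℕ) - m := by omega
        omega
  have hkNge : ∀ j : Fin N, N ≤ kN j := by
    intro j
    simp only [hkN']
    split
    · exact hkN _ ‹_›
    · omega
  have key := hsp N aN haNb kN hkNmono hkNge
  have hgen : ∀ (f : ℕ → X), ∑ i ∈ Finset.range N, (if i < m then f i else 0)
      = ∑ i ∈ Finset.range m, f i := by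
    intro f
    rw [← Finset.sum_subset (Finset.range_subset_range.2 hm)
      (fun i _ hi => if_neg (by simpa using hi))]
    exact Finset.sum_congr rfl fun i hi => if_pos (Finset.mem_range.mp hi)
  have hgen' : ∀ (f : ℕ → Y), ∑ i ∈ Finset.range N, (if i < m then f i else 0)
      = ∑ i ∈ Finset.range m, f i := by
    intro f
    rw [← Finset.sum_subset (Finset.range_subset_range.2 hm)
      (fun i _ hi => if_neg (by simpa using hi))]
    exact Finset.sum_congr rfl fun i hi => if_pos (Finset.mem_range.mp hi)
  have hx : ∑ j : Fin N, aN j • x (kN j) = ∑ i ∈ Finset.range m, b i • x (k i) := by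
    have h1 : ∀ j : Fin N, aN j • x (kN j)
        = (fun i => if i < m then b i • x (k i) else 0) (j : ℕ) := by
      intro j
      simp only [haN, hkN']
      split
      · simp [*]
      · simp
    calc ∑ j : Fin N, aN j • x (kN j)
        = ∑ j : Fin N, (fun i => if i < m then b i • x (k i) else 0) (j : ℕ) :=
          Finset.sum_congr rfl (fun j _ => h1 j)
      _ = ∑ i ∈ Finset.range N, (if i < m then b i • x (k i) else 0) :=
          Fin.sum_univ_eq_sum_range (fun i => if i < m then b i • x (k i) else 0) N
      _ = ∑ i ∈ Finset.range m, b i • x (k i) := hgen _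
  have hxt : ∑ j : Fin N, aN j • xt (j : ℕ) = ∑ i ∈ Finset.range m, b i • xt i := by
    have h1 : ∀ j : Fin N, aN j • xt (j : ℕ)
        = (fun i => if i < m then b i • xt i else 0) (j : ℕ) := by
      intro j
      simp only [haN]
      split
      · simp
      · simp
    calc ∑ j : Fin N, aN j • xt (j : ℕ)
        = ∑ j : Fin N, (fun i => if i < m then b i • xt i else 0) (j : ℕ) :=
          Finset.sum_congr rfl (fun j _ => h1 j)
      _ = ∑ i ∈ Finset.range N, (if i < m then b i • xt i else 0) :=
          Fin.sum_univ_eq_sum_range (fun i => if i < m then b i • xt i else 0) N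
      _ = ∑ i ∈ Finset.range m, b i • xt i := hgen' _
  rw [hx, hxt] at key
  exact key

lemma exists_goodN (hεt : Tendsto ε atTop (nhds 0)) (γ : ℝ) (hγ : 0 < γ) (m : ℕ) :
    ∃ N, m ≤ N ∧ ε N < γ :=
  ((eventually_ge_atTop m).and (hεt.eventually (gt_mem_nhds hγ))).exists

/-- compression / spreading invariance of `xt` -/
lemma lemC (hsp : SP x xt ε) (hεt : Tendsto ε atTop (nhds 0)) (m : ℕ) (b : ℕ → ℝ)
    (ι : ℕ → ℕ) (hι : ∀ ⦃i j : ℕ⦄, i < j → j < m → ι i < ι j) :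
    ‖∑ i ∈ Finset.range m, b i • xt (ι i)‖ = ‖∑ i ∈ Finset.range m, b i • xt i‖ := by
  classical
  -- reduce to the case of small coefficients
  set s : ℝ := 1 + ∑ i ∈ Finset.range m, |b i| with hs
  have hspos : 0 < s := by
    have : (0:ℝ) ≤ ∑ i ∈ Finset.range m, |b i| :=
      Finset.sum_nonneg fun i _ => abs_nonneg _
    linarith
  set c : ℕ → ℝ := fun i => b i / s with hc
  have hcb : ∀ i < m, |c i| ≤ 1 := by
    intro i hi
    have h1 : |b i| ≤ ∑ j ∈ Finset.range m, |b j| :=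
      Finset.single_le_sum (f := fun j => |b j|) (fun j _ => abs_nonneg _)
        (Finset.mem_range.mpr hi)
    rw [hc, abs_div, abs_of_pos hspos, div_le_one hspos]
    linarith
  have hrw : ∀ v : ℕ → Y,
      ∑ i ∈ Finset.range m, b i • v i = s • ∑ i ∈ Finset.range m, c i • v i := by
    intro v
    rw [Finset.smul_sum]
    refine Finset.sum_congr rfl fun i _ => ?_
    rw [smul_smul, hc]
    field_simp
  have hιinj : ∀ ⦃i j : ℕ⦄, i < m → j < m → ι i = ι j → i = j := by
    intro i j hi hj hij
    by_contra hne
    rcases lt_or_gt_of_ne hne with h | h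
    · exact absurd hij (hι h hj).ne
    · exact absurd hij.symm (hι h hi).ne
  have hιbd : ∀ i < m, ι i ≤ (if m = 0 then 0 else ι (m-1)) := by
    intro i hi
    have hm0 : m ≠ 0 := by omega
    simp only [hm0, if_neg, not_false_iff, if_false]
    rcases lt_or_eq_of_le (Nat.le_sub_one_of_lt hi) with h | h
    · exact le_of_lt (hι h (by omega))
    · exact h ▸ le_rfl
  set m' : ℕ := (if m = 0 then 0 else ι (m-1)) + 1 with hm'
  have hιm' : ∀ i < m, ι i < m' := fun i hi =>
    Nat.lt_succ_of_le (hιbd i hi)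
  -- main approximate statement
  have key : ∀ γ : ℝ, 0 < γ →
      |‖∑ i ∈ Finset.range m, c i • xt (ι i)‖ - ‖∑ i ∈ Finset.range m, c i • xt i‖| < γ := by
    intro γ hγ
    obtain ⟨N, hN1, hN2⟩ := exists_goodN (ε := ε) hεt (γ/2) (by linarith) (max m m')
    have hNm : m ≤ N := le_trans (le_max_left _ _) hN1
    have hNm' : m' ≤ N := le_trans (le_max_right _ _) hN1
    set c' : ℕ → ℝ := fun j => ∑ i ∈ (Finset.range m).filter (fun i => ι i = j), c i with hc'
    have hfilter_sub : ∀ j, ∀ i₁ ∈ (Finset.range m).filter (fun i => ι i = j),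
        ∀ i₂ ∈ (Finset.range m).filter (fun i => ι i = j), i₁ = i₂ := by
      intro j i₁ h₁ i₂ h₂
      simp only [Finset.mem_filter, Finset.mem_range] at h₁ h₂
      exact hιinj h₁.1 h₂.1 (h₁.2.trans h₂.2.symm)
    have hc'b : ∀ j < m', |c' j| ≤ 1 := by
      intro j _
      calc |c' j| ≤ ∑ i ∈ (Finset.range m).filter (fun i => ι i = j), |c i| :=
            Finset.abs_sum_le_sum_abs _ _
        _ ≤ ((Finset.range m).filter (fun i => ι i = j)).card • (1:ℝ) := by
            refine Finset.sum_le_card_nsmul _ _ _ fun i hi => ?_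
            have := Finset.mem_filter.mp hi
            exact hcb i (Finset.mem_range.mp this.1)
        _ ≤ 1 := by
            have hcard : ((Finset.range m).filter (fun i => ι i = j)).card ≤ 1 :=
              Finset.card_le_one.mpr (fun i₁ h₁ i₂ h₂ => hfilter_sub j i₁ h₁ i₂ h₂)
            simp only [nsmul_eq_mul, mul_one]
            exact_mod_cast hcard
    have hmaps : ∀ i ∈ Finset.range m, ι i ∈ Finset.range m' := by
      intro i hi
      exact Finset.mem_range.mpr (hιm' i (Finset.mem_range.mp hi))
    have hfib : ∀ (v : ℕ → Y),
        ∑ j ∈ Finset.range m', c' j • v j = ∑ i ∈ Finset.range m, c i • v (ι i) := by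
      intro v
      have : ∀ j ∈ Finset.range m',
          c' j • v j = ∑ i ∈ (Finset.range m).filter (fun i => ι i = j), c i • v (ι i) := by
        intro j _
        rw [hc', Finset.sum_smul]
        refine Finset.sum_congr rfl fun i hi => ?_
        rw [(Finset.mem_filter.mp hi).2]
      rw [Finset.sum_congr rfl this]
      exact Finset.sum_fiberwise_of_maps_to hmaps _
    have hfibx : ∑ j ∈ Finset.range m', c' j • x (N + j)
        = ∑ i ∈ Finset.range m, c i • x (N + ι i) := by
      have : ∀ j ∈ Finset.range m',
          c' j • x (N + j) = ∑ i ∈ (Finset.range m).filter (fun i => ι i = j),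
            c i • x (N + ι i) := by
        intro j _
        rw [hc', Finset.sum_smul]
        refine Finset.sum_congr rfl fun i hi => ?_
        rw [(Finset.mem_filter.mp hi).2]
      rw [Finset.sum_congr rfl this]
      exact Finset.sum_fiberwise_of_maps_to hmaps _
    have hT1 := lemT hsp m N hNm c hcb (fun i => N + ι i)
      (fun i j hij hjm => by simpa using hι hij hjm) (fun i _ => Nat.le_add_right _ _)
    have hT2 := lemT hsp m' N hNm' c' hc'b (fun j => N + j)
      (fun i j hij _ => by simpa using hij) (fun i _ => Nat.le_add_right _ _)
    rw [hfibx] at hT2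
    have hV2 : Vv xt m' c' = ‖∑ i ∈ Finset.range m, c i • xt (ι i)‖ := by
      rw [Vv, hfib]
    rw [hV2] at hT2
    have hV1 : Vv xt m c = ‖∑ i ∈ Finset.range m, c i • xt i‖ := rfl
    rw [hV1] at hT1
    have h1 := abs_sub_abs_le_abs_sub (‖∑ i ∈ Finset.range m, c i • x (N + ι i)‖) 0
    calc |‖∑ i ∈ Finset.range m, c i • xt (ι i)‖ - ‖∑ i ∈ Finset.range m, c i • xt i‖|
        ≤ |‖∑ i ∈ Finset.range m, c i • xt (ι i)‖ - ‖∑ i ∈ Finset.range m, c i • x (N + ι i)‖|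
          + |‖∑ i ∈ Finset.range m, c i • x (N + ι i)‖ - ‖∑ i ∈ Finset.range m, c i • xt i‖| := by
          have := abs_sub_le (‖∑ i ∈ Finset.range m, c i • xt (ι i)‖)
            (‖∑ i ∈ Finset.range m, c i • x (N + ι i)‖) (‖∑ i ∈ Finset.range m, c i • xt i‖)
          exact this
      _ < γ/2 + γ/2 := by
          refine add_lt_add ?_ ?_
          · rw [abs_sub_comm]; exact lt_of_lt_of_le hT2 (le_of_lt hN2) |>.trans_le le_rfl
          · exact lt_of_lt_of_le hT1 (le_of_lt hN2) |>.trans_le le_rfl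
      _ = γ := by ring
  have hceq : ‖∑ i ∈ Finset.range m, c i • xt (ι i)‖ = ‖∑ i ∈ Finset.range m, c i • xt i‖ := by
    by_contra h
    have habs : 0 < |‖∑ i ∈ Finset.range m, c i • xt (ι i)‖ - ‖∑ i ∈ Finset.range m, c i • xt i‖| :=
      abs_pos.mpr (sub_ne_zero.mpr h)
    exact absurd (key _ habs) (lt_irrefl _)
  rw [hrw (fun i => xt (ι i)), hrw xt, norm_smul, norm_smul, hceq]

/-- Mazur: small norm convex combinations of far-out terms -/
lemma mazur (hwn : IsWeaklyNull x) (J : ℕ) (η : ℝ) (hη : 0 < η) :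
    ∃ (s : Finset ℕ) (lam : ℕ → ℝ), s.Nonempty ∧ (∀ t ∈ s, J ≤ t) ∧
      (∀ t ∈ s, 0 ≤ lam t) ∧ ∑ t ∈ s, lam t = 1 ∧ ‖∑ t ∈ s, lam t • x t‖ ≤ η := by
  classical
  set S : Set X := x '' {j | J ≤ j} with hS
  have h0 : (0:X) ∈ closure (convexHull ℝ S) := by
    by_contra h
    obtain ⟨f, u, hfu, hu0⟩ := geometric_hahn_banach_closed_point
      ((convex_convexHull ℝ S).closure) isClosed_closure h
    have hu : u < 0 := by simpa using hu0
    have hf : ∀ j, J ≤ j → f (x j) < u := by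
      intro j hj
      exact hfu _ (subset_closure (subset_convexHull ℝ S ⟨j, hj, rfl⟩))
    have hev : ∀ᶠ i in atTop, u < f (x i) := by
      have : Set.Ioi u ∈ nhds (0:ℝ) := Ioi_mem_nhds hu
      exact (hwn f).eventually this
    obtain ⟨j, hjJ, hju⟩ := ((eventually_ge_atTop J).and hev).exists
    exact absurd (hf j hjJ) (not_lt.mpr (le_of_lt hju))
  obtain ⟨y, hy, hyn⟩ : ∃ y ∈ convexHull ℝ S, ‖y‖ ≤ η := by
    rw [Metric.mem_closure_iff] at h0
    obtain ⟨y, hy, hd⟩ := h0 η hη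
    exact ⟨y, hy, by rw [dist_comm] at hd; simpa [dist_eq_norm] using hd.le⟩
  rw [mem_convexHull_iff_exists_fintype] at hy
  obtain ⟨ι, hfin, w, z, hw, hw1, hz, hzy⟩ := hy
  have hch : ∀ i : ι, ∃ j : ℕ, J ≤ j ∧ x j = z i := by
    intro i
    obtain ⟨j, hj, hxj⟩ := hz i
    exact ⟨j, hj, hxj⟩
  choose jf hjf hxjf using hch
  set s : Finset ℕ := Finset.image jf Finset.univ with hs
  set lam : ℕ → ℝ := fun t => ∑ i ∈ Finset.univ.filter (fun i => jf i = t), w i with hlam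
  have hmaps : ∀ i ∈ (Finset.univ : Finset ι), jf i ∈ s := by
    intro i _; exact Finset.mem_image_of_mem _ (Finset.mem_univ i)
  refine ⟨s, lam, ?_, ?_, ?_, ?_, ?_⟩
  · by_contra h
    rw [Finset.not_nonempty_iff_eq_empty] at h
    have : ∑ i : ι, w i = 0 := by
      have : (Finset.univ : Finset ι) = ∅ := by
        by_contra h2
        obtain ⟨i, _⟩ := Finset.nonempty_iff_ne_empty.mpr h2
        exact absurd (hmaps i (Finset.mem_univ i)) (by simp [h])
      rw [this, Finset.sum_empty]
    rw [this] at hw1; norm_num at hw1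
  · intro t ht
    obtain ⟨i, _, hi⟩ := Finset.mem_image.mp ht
    exact hi ▸ hjf i
  · intro t _
    exact Finset.sum_nonneg fun i _ => hw i
  · rw [hlam, Finset.sum_fiberwise_of_maps_to hmaps, hw1]
  · have : ∑ t ∈ s, lam t • x t = y := by
      rw [← hzy]
      have h1 : ∀ t ∈ s, lam t • x t
          = ∑ i ∈ Finset.univ.filter (fun i => jf i = t), w i • z i := by
        intro t _
        rw [hlam, Finset.sum_smul]
        refine Finset.sum_congr rfl fun i hi => ?_
        rw [← hxjf i, (Finset.mem_filter.mp hi).2]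
      rw [Finset.sum_congr rfl h1, Finset.sum_fiberwise_of_maps_to hmaps]
    rw [this]; exact hyn

/-- suppression: zeroing out one coefficient does not increase the norm -/
lemma lemS (hsp : SP x xt ε) (hwn : IsWeaklyNull x) (hεt : Tendsto ε atTop (nhds 0))
    (m : ℕ) (b : ℕ → ℝ) (i₀ : ℕ) :
    ‖∑ i ∈ Finset.range m, (Function.update b i₀ 0) i • xt i‖
      ≤ ‖∑ i ∈ Finset.range m, b i • xt i‖ := by
  classical
  rcases le_or_gt m i₀ with hi₀ | hi₀
  · refine le_of_eq (congrArg _ (Finset.sum_congr rfl fun i hi => ?_))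
    rw [Function.update_of_ne (by have := Finset.mem_range.mp hi; omega)]
  -- scaling
  set s : ℝ := 1 + ∑ i ∈ Finset.range m, |b i| with hs
  have hspos : 0 < s := by
    have : (0:ℝ) ≤ ∑ i ∈ Finset.range m, |b i| :=
      Finset.sum_nonneg fun i _ => abs_nonneg _
    linarith
  set c : ℕ → ℝ := fun i => b i / s with hc
  have hcb : ∀ i < m, |c i| ≤ 1 := by
    intro i hi
    have h1 : |b i| ≤ ∑ j ∈ Finset.range m, |b j| :=
      Finset.single_le_sum (f := fun j => |b j|) (fun j _ => abs_nonneg _)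
        (Finset.mem_range.mpr hi)
    rw [hc, abs_div, abs_of_pos hspos, div_le_one hspos]
    linarith
  have hupd : ∀ i, Function.update b i₀ 0 i = s * (Function.update c i₀ 0 i) := by
    intro i
    rcases eq_or_ne i i₀ with h | h
    · subst h; simp
    · rw [Function.update_of_ne h, Function.update_of_ne h, hc]
      field_simp
  have hb' : ∀ i, b i = s * c i := by
    intro i; rw [hc]; field_simp
  have hrw1 : ∑ i ∈ Finset.range m, (Function.update b i₀ 0) i • xt i
      = s • ∑ i ∈ Finset.range m, (Function.update c i₀ 0) i • xt i := by
    rw [Finset.smul_sum]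
    exact Finset.sum_congr rfl fun i _ => by rw [hupd i, smul_smul]
  have hrw2 : ∑ i ∈ Finset.range m, b i • xt i
      = s • ∑ i ∈ Finset.range m, c i • xt i := by
    rw [Finset.smul_sum]
    exact Finset.sum_congr rfl fun i _ => by rw [hb' i, smul_smul]
  rw [hrw1, hrw2, norm_smul, norm_smul]
  refine mul_le_mul_of_nonneg_left ?_ (norm_nonneg _)
  -- main statement for `c`
  refine le_of_forall_pos_le_add fun ρ hρ => ?_
  set γ : ℝ := ρ/3 with hγdef
  have hγ : 0 < γ := by positivity
  obtain ⟨N, hNm, hNε⟩ := exists_goodN (ε := ε) hεt γ hγ m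
  obtain ⟨ss, lam, hne, hssJ, hlam0, hlam1, hu⟩ := mazur (x := x) hwn (N + i₀) γ hγ
  set P : ℕ := ss.max' hne with hP
  have htP : ∀ t ∈ ss, t ≤ P := fun t ht => Finset.le_max' ss t ht
  set k : ℕ → ℕ → ℕ :=
    fun t i => if i < i₀ then N + i else if i = i₀ then t else P + 1 + i with hk
  set u : X := ∑ t ∈ ss, lam t • x t with hudef
  have hkfacts : ∀ t ∈ ss, (∀ ⦃i j : ℕ⦄, i < j → j < m → k t i < k t j)
      ∧ (∀ i < m, N ≤ k t i) := by
    intro t ht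
    have h1 : N + i₀ ≤ t := hssJ t ht
    have h2 : t ≤ P := htP t ht
    constructor
    · intro i j hij hjm
      simp only [hk]
      split_ifs <;> omega
    · intro i _
      simp only [hk]
      split_ifs <;> omega
  -- the norm of each spread vector
  have hTt : ∀ t ∈ ss, ‖∑ i ∈ Finset.range m, c i • x (k t i)‖ < Vv xt m c + γ := by
    intro t ht
    have := lemT hsp m N hNm c hcb (k t) (hkfacts t ht).1 (hkfacts t ht).2
    have h2 := (abs_sub_lt_iff.mp this).1
    linarith
  set t₀ : ℕ := N + i₀ with ht₀
  have ht₀1 : N + i₀ ≤ t₀ := le_rfl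
  have ht₀2 : t₀ ≤ P := le_trans (hssJ _ hne.choose_spec) (htP _ hne.choose_spec)
  set kk : ℕ → ℕ := k t₀ with hkk
  have hkkmono : ∀ ⦃i j : ℕ⦄, i < j → j < m → kk i < kk j := by
    intro i j hij hjm
    simp only [hkk, hk]
    split_ifs <;> omega
  have hkkge : ∀ i < m, N ≤ kk i := by
    intro i _
    simp only [hkk, hk]
    split_ifs <;> omega
  have hknoti : ∀ t ∈ ss, ∀ i, i ≠ i₀ → k t i = kk i := by
    intro t _ i hi
    simp only [hkk, hk]
    split_ifs <;> rfl
  have hki₀ : ∀ t, k t i₀ = t := by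
    intro t
    simp only [hk]
    split_ifs <;> omega
  set w : X := ∑ t ∈ ss, lam t • (∑ i ∈ Finset.range m, c i • x (k t i)) with hw
  have hwle : ‖w‖ ≤ Vv xt m c + γ := by
    calc ‖w‖ ≤ ∑ t ∈ ss, ‖lam t • (∑ i ∈ Finset.range m, c i • x (k t i))‖ :=
          norm_sum_le _ _
      _ ≤ ∑ t ∈ ss, lam t * (Vv xt m c + γ) := by
          refine Finset.sum_le_sum fun t ht => ?_
          rw [norm_smul, Real.norm_eq_abs, abs_of_nonneg (hlam0 t ht)]
          exact mul_le_mul_of_nonneg_left (le_of_lt (hTt t ht)) (hlam0 t ht)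
      _ = Vv xt m c + γ := by rw [← Finset.sum_mul, hlam1, one_mul]
  have hwid : w = ∑ i ∈ Finset.range m, (if i = i₀ then c i₀ • u else c i • x (kk i)) := by
    rw [hw]
    rw [Finset.sum_congr rfl (fun t _ => Finset.smul_sum
      (r := lam t) (f := fun i => c i • x (k t i)) (s := Finset.range m))]
    rw [Finset.sum_comm]
    refine Finset.sum_congr rfl fun i _ => ?_
    rcases eq_or_ne i i₀ with h | h
    · subst h
      simp only [if_pos]
      rw [hudef, Finset.smul_sum]
      refine Finset.sum_congr rfl fun t ht => ?_
      rw [hki₀ t, smul_comm]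
    · rw [if_neg h]
      rw [Finset.sum_congr rfl (fun t ht => by rw [hknoti t ht i h])]
      rw [← Finset.sum_smul, hlam1, one_smul]
  have e1 : ∑ i ∈ (Finset.range m).erase i₀, (if i = i₀ then c i₀ • u else c i • x (kk i))
      = ∑ i ∈ (Finset.range m).erase i₀, (Function.update c i₀ 0) i • x (kk i) :=
    Finset.sum_congr rfl fun i hi => by
      have hne' := Finset.ne_of_mem_erase hi
      rw [if_neg hne', Function.update_of_ne hne']
  have hGsum : ∑ i ∈ Finset.range m, (Function.update c i₀ 0) i • x (kk i)
      = ∑ i ∈ (Finset.range m).erase i₀, (Function.update c i₀ 0) i • x (kk i) := by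
    rw [← Finset.sum_erase_add _ _ (Finset.mem_range.mpr hi₀)]
    simp
  have hsplit : w = (∑ i ∈ Finset.range m, (Function.update c i₀ 0) i • x (kk i)) + c i₀ • u := by
    rw [hwid, ← Finset.sum_erase_add _ _ (Finset.mem_range.mpr hi₀), e1, if_pos rfl, hGsum]
  have h1 : ‖∑ i ∈ Finset.range m, (Function.update c i₀ 0) i • x (kk i)‖
      ≤ Vv xt m c + γ + γ := by
    have h2 : ∑ i ∈ Finset.range m, (Function.update c i₀ 0) i • x (kk i) = w - c i₀ • u := by
      rw [hsplit]; abel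
    rw [h2]
    calc ‖w - c i₀ • u‖ ≤ ‖w‖ + ‖c i₀ • u‖ := norm_sub_le _ _
      _ ≤ (Vv xt m c + γ) + |c i₀| * ‖u‖ := by
          rw [norm_smul, Real.norm_eq_abs]
          exact add_le_add hwle le_rfl
      _ ≤ Vv xt m c + γ + γ := by
          have h3 : |c i₀| * ‖u‖ ≤ 1 * γ :=
            mul_le_mul (hcb i₀ hi₀) hu (norm_nonneg _) zero_le_one
          linarith
  have hupdb : ∀ i < m, |Function.update c i₀ 0 i| ≤ 1 := by
    intro i hi
    rcases eq_or_ne i i₀ with h | h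
    · subst h; simp
    · rw [Function.update_of_ne h]; exact hcb i hi
  have hT2 := lemT hsp m N hNm (Function.update c i₀ 0) hupdb kk hkkmono hkkge
  have hT2' := (abs_sub_lt_iff.mp hT2).2
  have : Vv xt m (Function.update c i₀ 0) ≤ Vv xt m c + ρ := by
    have : ε N < γ := hNε
    have hγρ : γ + γ + γ = ρ := by rw [hγdef]; ring
    linarith
  exact this



lemma lemZero (hsp : SP x xt ε) (hwn : IsWeaklyNull x) (hεt : Tendsto ε atTop (nhds 0))
    (B : Finset ℕ) : ∀ (m : ℕ) (b : ℕ → ℝ),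
    ‖∑ i ∈ Finset.range m, (if i ∈ B then 0 else b i) • xt i‖
      ≤ ‖∑ i ∈ Finset.range m, b i • xt i‖ := by
  classical
  induction B using Finset.induction_on with
  | empty => intro m b; simp
  | insert j B hjB ih =>
    intro m b
    have heq : ∀ i, (if i ∈ insert j B then (0:ℝ) else b i)
        = (if i ∈ B then 0 else Function.update b j 0 i) := by
      intro i
      by_cases hiB : i ∈ B
      · simp [hiB, Finset.mem_insert]
      · by_cases hij : i = j
        · subst hij; simp [hjB]
        · simp [Finset.mem_insert, hij, hiB, Function.update_of_ne hij]
    calc ‖∑ i ∈ Finset.range m, (if i ∈ insert j B then 0 else b i) • xt i‖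
        = ‖∑ i ∈ Finset.range m, (if i ∈ B then 0 else Function.update b j 0 i) • xt i‖ := by
          exact congrArg _ (Finset.sum_congr rfl fun i _ => by rw [heq i])
      _ ≤ ‖∑ i ∈ Finset.range m, Function.update b j 0 i • xt i‖ := ih m _
      _ ≤ ‖∑ i ∈ Finset.range m, b i • xt i‖ := lemS hsp hwn hεt m b j

lemma lemFlip (hsp : SP x xt ε) (hwn : IsWeaklyNull x) (hεt : Tendsto ε atTop (nhds 0))
    (m : ℕ) (b b' : ℕ → ℝ) (h : ∀ i < m, |b' i| = |b i|) :
    ‖∑ i ∈ Finset.range m, b' i • xt i‖ ≤ 2 * ‖∑ i ∈ Finset.range m, b i • xt i‖ := by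
  classical
  set P : Finset ℕ := (Finset.range m).filter (fun i => b' i = b i) with hP
  have hsplit : ∀ i ∈ Finset.range m,
      b' i • xt i = (if i ∈ P then b i else 0) • xt i + (if i ∈ P then 0 else -(b i)) • xt i := by
    intro i hi
    rw [← add_smul]
    congr 1
    by_cases hiP : i ∈ P
    · have : b' i = b i := (Finset.mem_filter.mp hiP).2
      simp [hiP, this]
    · have hne : b' i ≠ b i := by
        intro hc
        exact hiP (Finset.mem_filter.mpr ⟨hi, hc⟩)
      have := abs_eq_abs.mp (h i (Finset.mem_range.mp hi))
      rcases this with h1 | h1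
      · exact absurd h1 hne
      · simp [hiP, h1]
  calc ‖∑ i ∈ Finset.range m, b' i • xt i‖
      = ‖(∑ i ∈ Finset.range m, (if i ∈ P then b i else 0) • xt i)
          + ∑ i ∈ Finset.range m, (if i ∈ P then 0 else -(b i)) • xt i‖ := by
        rw [← Finset.sum_add_distrib]
        exact congrArg _ (Finset.sum_congr rfl hsplit)
    _ ≤ ‖∑ i ∈ Finset.range m, (if i ∈ P then b i else 0) • xt i‖
          + ‖∑ i ∈ Finset.range m, (if i ∈ P then 0 else -(b i)) • xt i‖ := norm_add_le _ _
    _ ≤ ‖∑ i ∈ Finset.range m, b i • xt i‖ + ‖∑ i ∈ Finset.range m, b i • xt i‖ := by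
        refine add_le_add ?_ ?_
        · have : ∀ i ∈ Finset.range m, (if i ∈ P then b i else 0) • xt i
              = (if i ∈ (Finset.range m \ P) then 0 else b i) • xt i := by
            intro i hi
            by_cases hiP : i ∈ P
            · simp [hiP, Finset.mem_sdiff]
            · simp [hiP, Finset.mem_sdiff, hi]
          rw [Finset.sum_congr rfl this]
          exact lemZero hsp hwn hεt _ m b
        · have h2 := lemZero hsp hwn hεt P m (fun i => -(b i))
          refine le_trans h2 ?_
          have : ∑ i ∈ Finset.range m, -(b i) • xt i = -∑ i ∈ Finset.range m, b i • xt i := by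
            rw [← Finset.sum_neg_distrib]
            exact Finset.sum_congr rfl fun i _ => by rw [neg_smul]
          rw [this, norm_neg]
    _ = 2 * ‖∑ i ∈ Finset.range m, b i • xt i‖ := by ring

end SM

/-- norm of the sum of the first `m` terms of `xt` -/
def fm (xt : ℕ → Y) (m : ℕ) : ℝ := ‖∑ i ∈ Finset.range m, xt i‖

section Part

lemma exists_partition {α : Type*} [DecidableEq α] (n : ℕ) (hn : 0 < n) :
    ∀ (N : ℕ) (s : Finset α), s.card ≤ N → n ≤ s.card → ∃ Ps : Finset (Finset α),
      (s = Ps.biUnion id) ∧ (∀ B ∈ Ps, n ≤ B.card ∧ B.card ≤ 2*n) ∧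
      ((Ps : Set (Finset α)).PairwiseDisjoint id) := by
  intro N
  induction N with
  | zero =>
    intro s h1 h2
    omega
  | succ N ih =>
    intro s h1 h2
    by_cases hsmall : s.card ≤ 2*n
    · refine ⟨{s}, ?_, ?_, ?_⟩
      · simp
      · intro B hB
        rw [Finset.mem_singleton] at hB
        subst hB
        exact ⟨h2, hsmall⟩
      · simp
    · obtain ⟨B, hBsub, hBcard⟩ := Finset.exists_subset_card_eq (le_trans h2 le_rfl)
      have hrest : (s \ B).card = s.card - n := by
        rw [Finset.card_sdiff_of_subset hBsub, hBcard]
      obtain ⟨Ps', hPs'1, hPs'2, hPs'3⟩ := ih (s \ B) (by omega) (by omega)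
      have hBdisj : ∀ B' ∈ Ps', Disjoint B B' := by
        intro B' hB'
        have hsub' : B' ⊆ s \ B := hPs'1 ▸ Finset.subset_biUnion_of_mem id hB'
        rw [Finset.disjoint_left]
        intro a haB haB'
        exact (Finset.mem_sdiff.mp (hsub' haB')).2 haB
      refine ⟨insert B Ps', ?_, ?_, ?_⟩
      · rw [Finset.biUnion_insert, ← hPs'1, id]
        rw [Finset.union_sdiff_of_subset hBsub]
      · intro B' hB'
        rcases Finset.mem_insert.mp hB' with h | h
        · subst h; omega
        · exact hPs'2 B' h
      · intro u hu v hv huv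
        simp only [Finset.coe_insert, Set.mem_insert_iff, Finset.mem_coe] at hu hv
        simp only [Function.onFun, id]
        rcases hu with hu | hu <;> rcases hv with hv | hv
        · exact absurd (hu.trans hv.symm) huv
        · subst hu; exact hBdisj v hv
        · subst hv; exact (hBdisj u hu).symm
        · exact hPs'3 hu hv huv

end Part

section Ell1

lemma ell1G_set_nonempty (M : ℕ) (a : ℕ →₀ ℝ) :
    (0:ℝ) ∈ {t | ∃ G : Finset ℕ, G.card ≤ M ∧ t = ∑ i ∈ G, |a i|} :=
  ⟨∅, by simp⟩

lemma ell1G_elem_le (M : ℕ) (a : ℕ →₀ ℝ) (G : Finset ℕ) :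
    ∑ i ∈ G, |a i| ≤ ∑ i ∈ a.support, |a i| := by
  classical
  have h1 : ∑ i ∈ G, |a i| = ∑ i ∈ G.filter (fun i => a i ≠ 0), |a i| := by
    rw [Finset.sum_filter_of_ne]
    intro i _ hai
    intro hc
    exact hai (by rw [hc, abs_zero])
  rw [h1]
  refine Finset.sum_le_sum_of_subset_of_nonneg ?_ (fun i _ _ => abs_nonneg _)
  intro i hi
  exact Finsupp.mem_support_iff.mpr (Finset.mem_filter.mp hi).2

lemma ell1G_bddAbove (M : ℕ) (a : ℕ →₀ ℝ) :
    BddAbove {t | ∃ G : Finset ℕ, G.card ≤ M ∧ t = ∑ i ∈ G, |a i|} := by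
  refine ⟨∑ i ∈ a.support, |a i|, fun t ht => ?_⟩
  obtain ⟨G, _, rfl⟩ := ht
  exact ell1G_elem_le M a G

lemma ell1G_nonneg (M : ℕ) (a : ℕ →₀ ℝ) : 0 ≤ ell1G M a :=
  le_csSup (ell1G_bddAbove M a) (ell1G_set_nonempty M a)

lemma ell1G_ge (M : ℕ) (a : ℕ →₀ ℝ) (G : Finset ℕ) (hG : G.card ≤ M) :
    ∑ i ∈ G, |a i| ≤ ell1G M a :=
  le_csSup (ell1G_bddAbove M a) ⟨G, hG, rfl⟩

lemma ell1G_le (M : ℕ) (a : ℕ →₀ ℝ) (B : ℝ)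
    (h : ∀ G : Finset ℕ, G.card ≤ M → ∑ i ∈ G, |a i| ≤ B) : ell1G M a ≤ B := by
  refine csSup_le ⟨0, ell1G_set_nonempty M a⟩ fun t ht => ?_
  obtain ⟨G, hG, rfl⟩ := ht
  exact h G hG

lemma ell1G_le_l1 (M : ℕ) (a : ℕ →₀ ℝ) : ell1G M a ≤ ∑ i ∈ a.support, |a i| :=
  ell1G_le M a _ fun G _ => ell1G_elem_le M a G

lemma ell1G_mono (a : ℕ →₀ ℝ) {M M' : ℕ} (h : M ≤ M') : ell1G M a ≤ ell1G M' a :=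
  ell1G_le M a _ fun G hG => ell1G_ge M' a G (le_trans hG h)

lemma ell1G_chunk (a : ℕ →₀ ℝ) (M : ℕ) :
    ∀ (k : ℕ) (G : Finset ℕ), G.card ≤ k * M → ∑ i ∈ G, |a i| ≤ k * ell1G M a := by
  intro k
  induction k with
  | zero =>
    intro G hG
    have : G = ∅ := Finset.card_eq_zero.mp (by omega)
    subst this
    simp
  | succ k ih =>
    intro G hG
    by_cases hGM : G.card ≤ M
    · refine le_trans (ell1G_ge M a G hGM) ?_
      have h0 := ell1G_nonneg M a
      have hk0 : (0:ℝ) ≤ (k:ℝ) := Nat.cast_nonneg k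
      push_cast
      nlinarith
    · push_neg at hGM
      obtain ⟨G₁, hG₁sub, hG₁card⟩ := Finset.exists_subset_card_eq (le_of_lt hGM)
      have hsplit : ∑ i ∈ G \ G₁, |a i| + ∑ i ∈ G₁, |a i| = ∑ i ∈ G, |a i| :=
        Finset.sum_sdiff hG₁sub
      have h1 : ∑ i ∈ G₁, |a i| ≤ ell1G M a := ell1G_ge M a G₁ (le_of_eq hG₁card)
      have h2 : ∑ i ∈ G \ G₁, |a i| ≤ k * ell1G M a := by
        refine ih _ ?_
        rw [Finset.card_sdiff_of_subset hG₁sub, hG₁card]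
        have hexp : (k+1) * M = k*M + M := by ring
        omega
      push_cast
      linarith

lemma ell1G_mul (a : ℕ →₀ ℝ) (M k : ℕ) : ell1G (k * M) a ≤ k * ell1G M a :=
  ell1G_le _ a _ fun G hG => ell1G_chunk a M k G hG

lemma count_big (a : ℕ →₀ ℝ) (M : ℕ) (hM : 1 ≤ M) (θ : ℝ) (hθ : ell1G M a ≤ θ * M) :
    (a.support.filter (fun i => θ < |a i|)).card ≤ M := by
  classical
  by_contra hcon
  push_neg at hcon
  obtain ⟨G, hGsub, hGcard⟩ := Finset.exists_subset_card_eq (le_of_lt hcon)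
  have hGne : G.Nonempty := Finset.card_pos.mp (by omega)
  have hstrict : ∑ i ∈ G, θ < ∑ i ∈ G, |a i| := by
    refine Finset.sum_lt_sum_of_nonempty hGne fun i hi => ?_
    exact (Finset.mem_filter.mp (hGsub hi)).2
  rw [Finset.sum_const, nsmul_eq_mul, hGcard] at hstrict
  have hle : ∑ i ∈ G, |a i| ≤ ell1G M a := ell1G_ge M a G (le_of_eq hGcard)
  have : θ * M < θ * M := by
    calc θ * M = M * θ := by ring
      _ < ∑ i ∈ G, |a i| := hstrict
      _ ≤ ell1G M a := hle
      _ ≤ θ * M := hθ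
  exact absurd this (lt_irrefl _)

end Ell1

section SM2

variable {x : ℕ → X} {xt : ℕ → Y} {ε : ℕ → ℝ}

lemma fm_nonneg (m : ℕ) : 0 ≤ fm xt m := norm_nonneg _

lemma lemCorner (hsp : SP x xt ε) (hwn : IsWeaklyNull x) (hεt : Tendsto ε atTop (nhds 0))
    (m : ℕ) (b : ℕ → ℝ) (hb : ∀ i < m, 0 ≤ b i ∧ b i ≤ 1) :
    ‖∑ i ∈ Finset.range m, b i • xt i‖ ≤ fm xt m := by
  classical
  suffices H : ∀ (d : ℕ) (b : ℕ → ℝ), (∀ i < m, 0 ≤ b i ∧ b i ≤ 1) →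
      ((Finset.range m).filter (fun i => b i ≠ 0 ∧ b i ≠ 1)).card ≤ d →
      ‖∑ i ∈ Finset.range m, b i • xt i‖ ≤ fm xt m by
    exact H _ b hb le_rfl
  intro d
  induction d with
  | zero =>
    intro b hb hcard
    have hfe : ∀ i < m, b i = 0 ∨ b i = 1 := by
      intro i hi
      by_contra hcon
      push_neg at hcon
      have hemp : (Finset.range m).filter (fun i => b i ≠ 0 ∧ b i ≠ 1) = ∅ :=
        Finset.card_eq_zero.mp (Nat.le_zero.mp hcard)
      have hmem : i ∈ (Finset.range m).filter (fun i => b i ≠ 0 ∧ b i ≠ 1) :=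
        Finset.mem_filter.mpr ⟨Finset.mem_range.mpr hi, hcon.1, hcon.2⟩
      rw [hemp] at hmem
      exact absurd hmem (Finset.notMem_empty i)
    set A : Finset ℕ := (Finset.range m).filter (fun i => b i = 0) with hA
    have : ∀ i ∈ Finset.range m, b i • xt i
        = (if i ∈ A then (0:ℝ) else 1) • xt i := by
      intro i hi
      congr 1
      by_cases hiA : i ∈ A
      · simp [hiA, (Finset.mem_filter.mp hiA).2]
      · rcases hfe i (Finset.mem_range.mp hi) with h0 | h1
        · exact absurd (Finset.mem_filter.mpr ⟨hi, h0⟩) hiA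
        · simp [hiA, h1]
    rw [Finset.sum_congr rfl this]
    have := lemZero hsp hwn hεt A m (fun _ => (1:ℝ))
    refine le_trans this (le_of_eq ?_)
    rw [fm]
    exact congrArg _ (Finset.sum_congr rfl fun i _ => one_smul ℝ _)
  | succ d ih =>
    intro b hb hcard
    by_cases hc : ((Finset.range m).filter (fun i => b i ≠ 0 ∧ b i ≠ 1)).card ≤ d
    · exact ih b hb hc
    · have hpos : 0 < ((Finset.range m).filter (fun i => b i ≠ 0 ∧ b i ≠ 1)).card := by omega
      obtain ⟨r, hr⟩ := Finset.card_pos.mp hpos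
      have hrm : r < m := Finset.mem_range.mp (Finset.mem_filter.mp hr).1
      have hr0 : b r ≠ 0 := (Finset.mem_filter.mp hr).2.1
      have hr1 : b r ≠ 1 := (Finset.mem_filter.mp hr).2.2
      have hbr0 : 0 < b r := lt_of_le_of_ne (hb r hrm).1 (Ne.symm hr0)
      have hbr1 : b r < 1 := lt_of_le_of_ne (hb r hrm).2 hr1
      have hkey : ∑ i ∈ Finset.range m, b i • xt i
          = (1 - b r) • (∑ i ∈ Finset.range m, Function.update b r 0 i • xt i)
            + b r • (∑ i ∈ Finset.range m, Function.update b r 1 i • xt i) := by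
        rw [Finset.smul_sum, Finset.smul_sum, ← Finset.sum_add_distrib]
        refine Finset.sum_congr rfl fun i _ => ?_
        rcases eq_or_ne i r with h | h
        · subst h
          simp [smul_smul]
        · rw [Function.update_of_ne h, Function.update_of_ne h, smul_smul, smul_smul,
            ← add_smul]
          congr 1
          ring
      have hcard' : ∀ v : ℝ, v = 0 ∨ v = 1 →
          ((Finset.range m).filter (fun i => Function.update b r v i ≠ 0
            ∧ Function.update b r v i ≠ 1)).card ≤ d := by
        intro v hv
        have hsub : (Finset.range m).filter (fun i => Function.update b r v i ≠ 0
            ∧ Function.update b r v i ≠ 1)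
            = ((Finset.range m).filter (fun i => b i ≠ 0 ∧ b i ≠ 1)).erase r := by
          ext i
          simp only [Finset.mem_filter, Finset.mem_erase, Finset.mem_range]
          constructor
          · rintro ⟨hi, h1, h2⟩
            rcases eq_or_ne i r with h | h
            · subst h
              rw [Function.update_self] at h1 h2
              rcases hv with h | h
              · exact absurd h h1
              · exact absurd h h2
            · rw [Function.update_of_ne h] at h1 h2
              exact ⟨h, hi, h1, h2⟩
          · rintro ⟨h, hi, h1, h2⟩
            rw [Function.update_of_ne h]
            exact ⟨hi, h1, h2⟩
        rw [hsub, Finset.card_erase_of_mem hr]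
        omega
      have hb0 : ∀ i < m, 0 ≤ Function.update b r 0 i ∧ Function.update b r 0 i ≤ 1 := by
        intro i hi
        rcases eq_or_ne i r with h | h
        · subst h; simp
        · rw [Function.update_of_ne h]; exact hb i hi
      have hb1 : ∀ i < m, 0 ≤ Function.update b r 1 i ∧ Function.update b r 1 i ≤ 1 := by
        intro i hi
        rcases eq_or_ne i r with h | h
        · subst h; simp
        · rw [Function.update_of_ne h]; exact hb i hi
      have h0 := ih (Function.update b r 0) hb0 (hcard' 0 (Or.inl rfl))
      have h1 := ih (Function.update b r 1) hb1 (hcard' 1 (Or.inr rfl))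
      calc ‖∑ i ∈ Finset.range m, b i • xt i‖
          ≤ (1 - b r) * ‖∑ i ∈ Finset.range m, Function.update b r 0 i • xt i‖
            + b r * ‖∑ i ∈ Finset.range m, Function.update b r 1 i • xt i‖ := by
            rw [hkey]
            refine le_trans (norm_add_le _ _) ?_
            rw [norm_smul, norm_smul, Real.norm_eq_abs, Real.norm_eq_abs,
              abs_of_nonneg (by linarith), abs_of_nonneg (by linarith)]
        _ ≤ (1 - b r) * fm xt m + b r * fm xt m := by
            refine add_le_add ?_ ?_
            · exact mul_le_mul_of_nonneg_left h0 (by linarith)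
            · exact mul_le_mul_of_nonneg_left h1 (by linarith)
        _ = fm xt m := by ring

lemma lemBound (hsp : SP x xt ε) (hwn : IsWeaklyNull x) (hεt : Tendsto ε atTop (nhds 0))
    (m : ℕ) (b : ℕ → ℝ) (t : ℝ) (ht : 0 ≤ t) (hb : ∀ i < m, |b i| ≤ t) :
    ‖∑ i ∈ Finset.range m, b i • xt i‖ ≤ 2 * t * fm xt m := by
  rcases eq_or_lt_of_le ht with h | h
  · subst h
    have hz : ∀ i ∈ Finset.range m, b i • xt i = 0 := by
      intro i hi
      have h2 := hb i (Finset.mem_range.mp hi)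
      have h3 : b i = 0 := abs_eq_zero.mp (le_antisymm h2 (abs_nonneg _))
      simp [h3]
    rw [Finset.sum_eq_zero hz, norm_zero]
    simp
  · have h1 : ‖∑ i ∈ Finset.range m, b i • xt i‖
        ≤ 2 * ‖∑ i ∈ Finset.range m, |b i| • xt i‖ :=
      lemFlip hsp hwn hεt m (fun i => |b i|) b (fun i _ => by simp [abs_abs])
    have h2 : ∑ i ∈ Finset.range m, |b i| • xt i
        = t • ∑ i ∈ Finset.range m, (|b i| / t) • xt i := by
      rw [Finset.smul_sum]
      refine Finset.sum_congr rfl fun i _ => ?_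
      rw [smul_smul]
      congr 1
      field_simp
    have h3 : ‖∑ i ∈ Finset.range m, (|b i| / t) • xt i‖ ≤ fm xt m := by
      refine lemCorner hsp hwn hεt m _ fun i hi => ?_
      constructor
      · positivity
      · rw [div_le_one h]
        exact hb i hi
    calc ‖∑ i ∈ Finset.range m, b i • xt i‖
        ≤ 2 * ‖∑ i ∈ Finset.range m, |b i| • xt i‖ := h1
      _ = 2 * (|t| * ‖∑ i ∈ Finset.range m, (|b i| / t) • xt i‖) := by
          rw [h2, norm_smul, Real.norm_eq_abs]
      _ ≤ 2 * (t * fm xt m) := by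
          rw [abs_of_pos h]
          refine mul_le_mul_of_nonneg_left ?_ (by norm_num)
          exact mul_le_mul_of_nonneg_left h3 (le_of_lt h)
      _ = 2 * t * fm xt m := by ring

lemma fm_mono (hsp : SP x xt ε) (hwn : IsWeaklyNull x) (hεt : Tendsto ε atTop (nhds 0))
    {m n : ℕ} (hmn : m ≤ n) : fm xt m ≤ fm xt n := by
  classical
  have e1 : ∑ i ∈ Finset.range n, (if i ∈ Finset.Ico m n then (0:ℝ) else 1) • xt i
      = ∑ i ∈ Finset.range m, (if i ∈ Finset.Ico m n then (0:ℝ) else 1) • xt i := by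
    refine (Finset.sum_subset (Finset.range_subset_range.2 hmn) fun i hi hni => ?_).symm
    have h2 := Finset.mem_range.mp hi
    have h3 : ¬ i < m := fun hc => hni (Finset.mem_range.mpr hc)
    rw [if_pos (Finset.mem_Ico.mpr ⟨by omega, by omega⟩), zero_smul]
  have e2 : ∑ i ∈ Finset.range m, (if i ∈ Finset.Ico m n then (0:ℝ) else 1) • xt i
      = ∑ i ∈ Finset.range m, xt i := by
    refine Finset.sum_congr rfl fun i hi => ?_
    have h2 := Finset.mem_range.mp hi
    rw [if_neg (fun hc => by have := (Finset.mem_Ico.mp hc).1; omega), one_smul]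
  have h1 : fm xt m = ‖∑ i ∈ Finset.range n,
      (if i ∈ Finset.Ico m n then (0:ℝ) else 1) • xt i‖ := by
    rw [fm]
    exact congrArg _ (e2.symm.trans e1.symm)
  rw [h1]
  have := lemZero hsp hwn hεt (Finset.Ico m n) n (fun _ => (1:ℝ))
  refine le_trans this (le_of_eq ?_)
  rw [fm]
  exact congrArg _ (Finset.sum_congr rfl fun i _ => one_smul ℝ _)

lemma fm_add (hsp : SP x xt ε) (hεt : Tendsto ε atTop (nhds 0)) (m n : ℕ) :
    fm xt (m + n) ≤ fm xt m + fm xt n := by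
  have hsplit : ∑ i ∈ Finset.range (m + n), xt i
      = ∑ i ∈ Finset.range m, xt i + ∑ i ∈ Finset.Ico m (m + n), xt i := by
    rw [Finset.range_eq_Ico, Finset.range_eq_Ico]
    exact (Finset.sum_Ico_consecutive xt (Nat.zero_le m) (Nat.le_add_right m n)).symm
  have hshift : ‖∑ i ∈ Finset.Ico m (m + n), xt i‖ = fm xt n := by
    rw [Finset.sum_Ico_eq_sum_range]
    simp only [Nat.add_sub_cancel_left]
    have h1 : ∑ i ∈ Finset.range n, xt (m + i)
        = ∑ i ∈ Finset.range n, (1:ℝ) • xt (m + i) := by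
      exact Finset.sum_congr rfl fun i _ => (one_smul ℝ _).symm
    have h2 := lemC (x := x) (ε := ε) hsp hεt n (fun _ => (1:ℝ)) (fun i => m + i)
      (fun i j hij _ => by simpa using hij)
    rw [h1, h2, fm]
    exact congrArg _ (Finset.sum_congr rfl fun i _ => one_smul ℝ _)
  calc fm xt (m + n) = ‖∑ i ∈ Finset.range m, xt i + ∑ i ∈ Finset.Ico m (m + n), xt i‖ := by
        rw [fm, hsplit]
    _ ≤ ‖∑ i ∈ Finset.range m, xt i‖ + ‖∑ i ∈ Finset.Ico m (m + n), xt i‖ := norm_add_le _ _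
    _ = fm xt m + fm xt n := by rw [hshift]; rfl

lemma fm_mul (hsp : SP x xt ε) (hεt : Tendsto ε atTop (nhds 0)) (k n : ℕ) :
    fm xt (k * n) ≤ k * fm xt n := by
  induction k with
  | zero => simp [fm]
  | succ k ih =>
    have : (k + 1) * n = k * n + n := by ring
    rw [this]
    refine le_trans (fm_add (x := x) hsp hεt _ _) ?_
    push_cast
    linarith

lemma xt_norm_eq (hsp : SP x xt ε) (hεt : Tendsto ε atTop (nhds 0)) (i : ℕ) :
    ‖xt i‖ = ‖xt 0‖ := by
  have := lemC (x := x) (ε := ε) hsp hεt 1 (fun _ => (1:ℝ)) (fun _ => i)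
    (fun a b hab hb1 => by omega)
  simpa using this

lemma xt_norm_le (hsp : SP x xt ε) (hεt : Tendsto ε atTop (nhds 0))
    (hεanti : Antitone ε) (hεpos : ∀ n, 0 < ε n)
    (hnorm : IsNormalizedSeq x) (i : ℕ) : ‖xt i‖ ≤ 1 + ε 1 := by
  rw [xt_norm_eq (x := x) hsp hεt i]
  have hT := lemT (ε := ε) hsp 1 1 le_rfl (fun _ => (1:ℝ)) (fun i _ => by norm_num)
    (fun _ => 1) (fun a b hab hb1 => by omega) (fun a _ => le_rfl)
  have h1 : ∑ i ∈ Finset.range 1, (1:ℝ) • x 1 = x 1 := by simp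
  have h2 : Vv xt 1 (fun _ => (1:ℝ)) = ‖xt 0‖ := by
    rw [Vv]
    simp
  rw [h2] at hT
  have h3 : ‖∑ i ∈ Finset.range 1, (fun _ => (1:ℝ)) i • x ((fun _ => 1) i)‖ = 1 := by
    simp [hnorm 1]
  rw [h3] at hT
  have := (abs_sub_lt_iff.mp hT).2
  linarith


lemma lp1_eq {n : ℕ} (a : Fin n → ℝ) : lpNormFin 1 a = ∑ i, |a i| := by
  rw [lpNormFin]
  rw [if_neg (by simp)]
  simp [ENNReal.toReal_one, Real.rpow_one]

lemma caseEquiv (hsp : SP x xt ε) (hwn : IsWeaklyNull x) (hεt : Tendsto ε atTop (nhds 0))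
    (hεanti : Antitone ε) (hεpos : ∀ n, 0 < ε n) (hnorm : IsNormalizedSeq x)
    {δ : ℝ} (hδ : 0 < δ) (hlow : ∀ n : ℕ, 1 ≤ n → δ * n ≤ fm xt n) :
    EquivToLpBasis 1 xt := by
  classical
  set C₀ : ℝ := 1 + ε 1 with hC₀
  have hC₀pos : 0 < C₀ := by have := hεpos 1; rw [hC₀]; linarith
  have hxtle : ∀ i, ‖xt i‖ ≤ C₀ :=
    fun i => xt_norm_le (x := x) (ε := ε) hsp hεt hεanti hεpos hnorm i
  set C : ℝ := max 1 (max C₀ (4 / δ)) with hC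
  have hC1 : (1:ℝ) ≤ C := le_max_left _ _
  have hCC₀ : C₀ ≤ C := le_trans (le_max_left _ _) (le_max_right _ _)
  have hC4δ : 4 / δ ≤ C := le_trans (le_max_right _ _) (le_max_right _ _)
  refine ⟨C, hC1, fun n a => ⟨?_, ?_⟩⟩
  · -- lower estimate
    set b : ℕ → ℝ := fun i => if h : i < n then a ⟨i, h⟩ else 0 with hb
    have hsum_eq : ∑ i, a i • xt (i : ℕ) = ∑ i ∈ Finset.range n, b i • xt i := by
      rw [← Fin.sum_univ_eq_sum_range (fun i => b i • xt i) n]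
      exact Finset.sum_congr rfl fun i _ => by rw [hb]; simp [i.isLt]
    have habs_eq : ∑ i, |a i| = ∑ i ∈ Finset.range n, |b i| := by
      rw [← Fin.sum_univ_eq_sum_range (fun i => |b i|) n]
      exact Finset.sum_congr rfl fun i _ => by rw [hb]; simp [i.isLt]
    set N : ℕ := max 1 ⌈2 * C₀ * n / δ⌉₊ with hN
    have hN1 : 1 ≤ N := le_max_left _ _
    have hNbd : 2 * C₀ * n / δ ≤ (N : ℝ) := by
      refine le_trans (Nat.le_ceil _) ?_
      exact_mod_cast le_max_right _ _
    have hfmN : δ * N ≤ fm xt N := hlow N hN1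
    set v : Y := ∑ i ∈ Finset.range N, xt i with hv
    have hvnorm : ‖v‖ = fm xt N := rfl
    have hv0 : v ≠ 0 := by
      intro hc
      rw [hc] at hvnorm
      rw [norm_zero] at hvnorm
      have hNpos : (0:ℝ) < N := by exact_mod_cast hN1
      nlinarith
    obtain ⟨g, hg1, hgv⟩ := exists_dual_vector ℝ v (norm_ne_zero_iff.mpr hv0)
    set A : Finset ℕ := (Finset.range N).filter (fun i => δ/2 ≤ g (xt i)) with hA
    have hgbound : ∀ i, g (xt i) ≤ C₀ := by
      intro i
      have h1 : ‖g (xt i)‖ ≤ ‖g‖ * ‖xt i‖ := g.le_opNorm _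
      rw [hg1, one_mul, Real.norm_eq_abs] at h1
      exact le_trans (le_abs_self _) (le_trans h1 (hxtle i))
    have hsum_g : δ * N ≤ ∑ i ∈ Finset.range N, g (xt i) := by
      have : g v = ∑ i ∈ Finset.range N, g (xt i) := by rw [hv, map_sum]
      rw [← this, hgv]
      exact le_trans hfmN (le_of_eq hvnorm.symm)
    have hcount : δ * N ≤ A.card * C₀ + N * (δ/2) := by
      have hsplit := Finset.sum_filter_add_sum_filter_not (Finset.range N)
        (fun i => δ/2 ≤ g (xt i)) (fun i => g (xt i))
      have h1 : ∑ i ∈ A, g (xt i) ≤ A.card * C₀ := by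
        refine le_trans (Finset.sum_le_card_nsmul _ _ C₀ fun i _ => hgbound i) ?_
        simp [nsmul_eq_mul]
      have h2 : ∑ i ∈ (Finset.range N).filter (fun i => ¬ δ/2 ≤ g (xt i)), g (xt i)
          ≤ N * (δ/2) := by
        refine le_trans (Finset.sum_le_card_nsmul _ _ (δ/2)
          fun i hi => le_of_lt (not_le.mp (Finset.mem_filter.mp hi).2)) ?_
        rw [nsmul_eq_mul]
        refine mul_le_mul_of_nonneg_right ?_ (by linarith)
        exact_mod_cast Finset.card_le_card (Finset.filter_subset _ _) |>.trans
          (le_of_eq (Finset.card_range N))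
      calc δ * N ≤ ∑ i ∈ Finset.range N, g (xt i) := hsum_g
        _ = ∑ i ∈ A, g (xt i) + ∑ i ∈ (Finset.range N).filter
            (fun i => ¬ δ/2 ≤ g (xt i)), g (xt i) := by rw [← hsplit]
        _ ≤ A.card * C₀ + N * (δ/2) := add_le_add h1 h2
    have hAn : n ≤ A.card := by
      have hδN : 2 * C₀ * n ≤ δ * N := by
        rw [div_le_iff₀ hδ] at hNbd
        linarith
      have h1 : C₀ * n ≤ A.card * C₀ := by nlinarith [hcount, hδN]
      have h2 : (n:ℝ) ≤ A.card := by
        by_contra hcon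
        push_neg at hcon
        have h3 := mul_lt_mul_of_pos_left hcon hC₀pos
        nlinarith
      exact_mod_cast h2
    obtain ⟨A', hA'sub, hA'card⟩ := Finset.exists_subset_card_eq hAn
    set ι : Fin n → ℕ := fun r => A'.orderEmbOfFin hA'card r with hι
    have hιmem : ∀ r : Fin n, ι r ∈ A := fun r => hA'sub (Finset.orderEmbOfFin_mem _ _ _)
    set ι' : ℕ → ℕ := fun r => if h : r < n then ι ⟨r, h⟩ else 0 with hι'
    have hι'mono : ∀ ⦃i j : ℕ⦄, i < j → j < n → ι' i < ι' j := by
      intro i j hij hjn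
      have hin : i < n := lt_trans hij hjn
      simp only [hι', dif_pos hin, dif_pos hjn]
      exact (A'.orderEmbOfFin hA'card).strictMono (Fin.mk_lt_mk.mpr hij)
    have hgδ : ∀ r < n, δ/2 ≤ g (xt (ι' r)) := by
      intro r hr
      simp only [hι', dif_pos hr]
      exact (Finset.mem_filter.mp (hιmem ⟨r, hr⟩)).2
    set u : Y := ∑ i ∈ Finset.range n, |b i| • xt (ι' i) with hu
    have hgu : (δ/2) * ∑ i ∈ Finset.range n, |b i| ≤ g u := by
      rw [hu, map_sum]
      rw [Finset.mul_sum]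
      refine Finset.sum_le_sum fun i hi => ?_
      rw [map_smul]
      have := hgδ i (Finset.mem_range.mp hi)
      have habs : 0 ≤ |b i| := abs_nonneg _
      calc δ/2 * |b i| = |b i| * (δ/2) := by ring
        _ ≤ |b i| * g (xt (ι' i)) := mul_le_mul_of_nonneg_left this habs
        _ = |b i| • g (xt (ι' i)) := by rw [smul_eq_mul]
    have hgu2 : g u ≤ ‖u‖ := by
      have h1 : ‖g u‖ ≤ ‖g‖ * ‖u‖ := g.le_opNorm _
      rw [hg1, one_mul, Real.norm_eq_abs] at h1
      exact le_trans (le_abs_self _) h1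
    have hcomp : ‖u‖ = ‖∑ i ∈ Finset.range n, |b i| • xt i‖ :=
      lemC (x := x) (ε := ε) hsp hεt n (fun i => |b i|) ι' hι'mono
    have hflip : ‖∑ i ∈ Finset.range n, |b i| • xt i‖
        ≤ 2 * ‖∑ i ∈ Finset.range n, b i • xt i‖ :=
      lemFlip hsp hwn hεt n b (fun i => |b i|) (fun i _ => abs_abs _)
    have hfinal : ∑ i ∈ Finset.range n, |b i| ≤ (4/δ) * ‖∑ i ∈ Finset.range n, b i • xt i‖ := by
      have h1 : (δ/2) * ∑ i ∈ Finset.range n, |b i|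
          ≤ 2 * ‖∑ i ∈ Finset.range n, b i • xt i‖ := by
        calc (δ/2) * ∑ i ∈ Finset.range n, |b i| ≤ g u := hgu
          _ ≤ ‖u‖ := hgu2
          _ = ‖∑ i ∈ Finset.range n, |b i| • xt i‖ := hcomp
          _ ≤ 2 * ‖∑ i ∈ Finset.range n, b i • xt i‖ := hflip
      rw [div_mul_eq_mul_div, le_div_iff₀ hδ]
      nlinarith
    rw [lp1_eq, habs_eq, hsum_eq]
    refine le_trans hfinal ?_
    exact mul_le_mul_of_nonneg_right hC4δ (norm_nonneg _)
  · -- upper estimate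
    rw [lp1_eq]
    calc ‖∑ i, a i • xt (i:ℕ)‖ ≤ ∑ i, ‖a i • xt (i:ℕ)‖ := norm_sum_le _ _
      _ ≤ ∑ i, |a i| * C₀ := by
          refine Finset.sum_le_sum fun i _ => ?_
          rw [norm_smul, Real.norm_eq_abs]
          exact mul_le_mul_of_nonneg_left (hxtle _) (abs_nonneg _)
      _ = C₀ * ∑ i, |a i| := by rw [← Finset.sum_mul]; ring
      _ ≤ C * ∑ i, |a i| := by
          refine mul_le_mul_of_nonneg_right hCC₀ ?_
          exact Finset.sum_nonneg fun i _ => abs_nonneg _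


lemma exists_good (hsp : SP x xt ε) (hwn : IsWeaklyNull x) (hεt : Tendsto ε atTop (nhds 0))
    (hεanti : Antitone ε) (hεpos : ∀ n, 0 < ε n) (hnorm : IsNormalizedSeq x)
    (hne1 : ¬ EquivToLpBasis 1 xt) (δ : ℝ) (hδ : 0 < δ) (N : ℕ) :
    ∃ n : ℕ, N ≤ n ∧ 1 ≤ n ∧ fm xt n ≤ δ * n ∧ ε n ≤ δ * n := by
  have hdich : ∃ m : ℕ, 1 ≤ m ∧ fm xt m ≤ (δ/2) * m := by
    by_contra hcon
    push_neg at hcon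
    refine hne1 (caseEquiv (x := x) (ε := ε) hsp hwn hεt hεanti hεpos hnorm
      (δ := δ/2) (by linarith) fun n hn => le_of_lt (hcon n hn))
  obtain ⟨n₀, hn₀1, hn₀⟩ := hdich
  set k : ℕ := max (max N 1) ⌈2 * ε 1 / δ⌉₊ with hk
  have hk1 : 1 ≤ k := le_trans (le_max_right N 1) (le_trans le_rfl (le_trans le_rfl
    (le_max_left _ _)))
  have hkN : N ≤ k := le_trans (le_max_left N 1) (le_max_left _ _)
  have hkε : 2 * ε 1 / δ ≤ (k:ℝ) := by
    refine le_trans (Nat.le_ceil _) ?_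
    exact_mod_cast le_max_right _ _
  have hkn₀ : 1 ≤ k * n₀ := Nat.one_le_iff_ne_zero.mpr (Nat.mul_ne_zero (by omega) (by omega))
  refine ⟨k * n₀, ?_, hkn₀, ?_, ?_⟩
  · exact le_trans hkN (Nat.le_mul_of_pos_right k (by omega))
  · have h1 : fm xt (k * n₀) ≤ k * fm xt n₀ := fm_mul (x := x) hsp hεt k n₀
    have h2 : (k:ℝ) * fm xt n₀ ≤ (k:ℝ) * ((δ/2) * n₀) :=
      mul_le_mul_of_nonneg_left hn₀ (by positivity)
    have h3 : (k:ℝ) * ((δ/2) * n₀) ≤ δ * (k * n₀) := by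
      push_cast
      nlinarith [mul_nonneg (mul_nonneg (le_of_lt hδ) (Nat.cast_nonneg (α := ℝ) k)) (Nat.cast_nonneg (α := ℝ) n₀)]
    push_cast
    push_cast at h1 h2 h3
    linarith
  · have h1 : ε (k * n₀) ≤ ε 1 := hεanti hkn₀
    have h2 : 2 * ε 1 ≤ δ * k := by
      rw [div_le_iff₀ hδ] at hkε
      linarith
    have h3 : δ * k ≤ δ * (k * n₀) := by
      have : (k:ℝ) ≤ (k:ℝ) * n₀ := by
        have hn₀' : (1:ℝ) ≤ n₀ := by exact_mod_cast hn₀1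
        nlinarith [Nat.cast_nonneg (α := ℝ) k]
      nlinarith
    have hε1 := hεpos 1
    push_cast at h3 ⊢
    linarith

lemma mass_bound (hnorm : IsNormalizedSeq x) (c : ℕ → ℝ) (κ : ℕ → ℕ) (P : Finset ℕ) :
    ‖∑ i ∈ P, c i • x (κ i)‖ ≤ ∑ i ∈ P, |c i| := by
  refine le_trans (norm_sum_le _ _) (le_of_eq (Finset.sum_congr rfl fun i _ => ?_))
  rw [norm_smul, Real.norm_eq_abs, hnorm, mul_one]

lemma blockBound (hsp : SP x xt ε) (hwn : IsWeaklyNull x) (hεt : Tendsto ε atTop (nhds 0))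
    (c : ℕ → ℝ) (κ : ℕ → ℕ) (hκ : StrictMono κ) (t : ℝ) (ht : 0 < t)
    (nj : ℕ) (P : Finset ℕ) (hcard : P.card ≤ 2*nj)
    (hidx : ∀ i ∈ P, 2*nj ≤ κ i) (hcoef : ∀ i ∈ P, |c i| ≤ t) :
    ‖∑ i ∈ P, c i • x (κ i)‖ ≤ t * (2 * fm xt (2*nj) + ε (2*nj)) := by
  classical
  set m := P.card with hm
  set en : ℕ → ℕ := fun r => if h : r < m then ((P.orderIsoOfFin hm.symm ⟨r, h⟩ : ℕ)) else 0
    with hen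
  have hen_mem : ∀ r < m, en r ∈ P := by
    intro r hr
    simp only [hen, dif_pos hr]
    exact (P.orderIsoOfFin hm.symm ⟨r, hr⟩).2
  have hen_mono : ∀ ⦃r s' : ℕ⦄, r < s' → s' < m → en r < en s' := by
    intro r s' hrs hs'
    have hr : r < m := lt_trans hrs hs'
    simp only [hen, dif_pos hr, dif_pos hs']
    have : (⟨r, hr⟩ : Fin m) < ⟨s', hs'⟩ := Fin.mk_lt_mk.mpr hrs
    have h2 := (P.orderIsoOfFin hm.symm).lt_iff_lt.mpr this
    exact_mod_cast h2
  set b : ℕ → ℝ := fun r => if h : r < m then c (en r) / t else 0 with hb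
  have hbb : ∀ r < m, |b r| ≤ 1 := by
    intro r hr
    simp only [hb, dif_pos hr]
    rw [abs_div, abs_of_pos ht, div_le_one ht]
    exact hcoef _ (hen_mem r hr)
  set k : ℕ → ℕ := fun r => κ (en r) with hkdef
  have hkmono : ∀ ⦃r s' : ℕ⦄, r < s' → s' < m → k r < k s' :=
    fun r s' hrs hs' => hκ (hen_mono hrs hs')
  have hkge : ∀ r < m, 2*nj ≤ k r := fun r hr => hidx _ (hen_mem r hr)
  have hT := lemT hsp m (2*nj) hcard b hbb k hkmono hkge
  have hVb : Vv xt m b ≤ 2 * fm xt (2*nj) := by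
    have h1 : Vv xt m b ≤ 2 * 1 * fm xt m := by
      refine lemBound hsp hwn hεt m b 1 zero_le_one fun i hi => ?_
      exact hbb i hi
    rw [mul_one] at h1
    exact le_trans h1 (mul_le_mul_of_nonneg_left
      (fm_mono (x := x) (ε := ε) hsp hwn hεt hcard) (by norm_num))
  have hsum : ∑ r ∈ Finset.range m, b r • x (k r) = ∑ i ∈ P, (c i / t) • x (κ i) := by
    refine Finset.sum_bij (fun r hr => en r) ?_ ?_ ?_ ?_
    · intro r hr
      exact hen_mem r (Finset.mem_range.mp hr)
    · intro r hr r' hr' heq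
      by_contra hne
      rcases lt_or_gt_of_ne hne with h | h
      · exact absurd heq (hen_mono h (Finset.mem_range.mp hr')).ne
      · exact absurd heq.symm (hen_mono h (Finset.mem_range.mp hr)).ne
    · intro p hp
      set q := (P.orderIsoOfFin hm.symm).symm ⟨p, hp⟩ with hq
      refine ⟨(q : ℕ), Finset.mem_range.mpr q.isLt, ?_⟩
      simp only [hen, dif_pos q.isLt]
      have : (P.orderIsoOfFin hm.symm) ⟨(q:ℕ), q.isLt⟩ = ⟨p, hp⟩ := by
        rw [Fin.eta]
        exact (P.orderIsoOfFin hm.symm).apply_symm_apply _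
      rw [this]
    · intro r hr
      have hrm := Finset.mem_range.mp hr
      simp only [hb, hkdef, dif_pos hrm]
  have hscale : ∑ i ∈ P, c i • x (κ i) = t • ∑ i ∈ P, (c i / t) • x (κ i) := by
    rw [Finset.smul_sum]
    refine Finset.sum_congr rfl fun i _ => ?_
    rw [smul_smul]
    congr 1
    field_simp
  have h2 := (abs_sub_lt_iff.mp hT).1
  calc ‖∑ i ∈ P, c i • x (κ i)‖ = |t| * ‖∑ i ∈ P, (c i / t) • x (κ i)‖ := by
        rw [hscale, norm_smul, Real.norm_eq_abs]
    _ = t * ‖∑ r ∈ Finset.range m, b r • x (k r)‖ := by rw [abs_of_pos ht, hsum]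
    _ ≤ t * (Vv xt m b + ε (2*nj)) := by
        refine mul_le_mul_of_nonneg_left ?_ (le_of_lt ht)
        linarith
    _ ≤ t * (2 * fm xt (2*nj) + ε (2*nj)) := by
        refine mul_le_mul_of_nonneg_left (by linarith) (le_of_lt ht)


lemma levelBound (hsp : SP x xt ε) (hwn : IsWeaklyNull x) (hεt : Tendsto ε atTop (nhds 0))
    (hnorm : IsNormalizedSeq x)
    (c : ℕ → ℝ) (κ : ℕ → ℕ) (hκ : StrictMono κ)
    (ρ : ℝ) (hρ : 0 < ρ) (nj : ℕ) (hnj : 1 ≤ nj)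
    (hfm2 : fm xt (2*nj) ≤ 2*ρ*nj) (hε2 : ε (2*nj) ≤ ρ*nj)
    (θhi θlo : ℝ) (hθlo : 0 ≤ θlo) (hθhi0 : 0 ≤ θhi)
    (K : ℕ) (hK : θhi / 2^K ≤ θlo)
    (L : Finset ℕ)
    (hcoefhi : ∀ i ∈ L, |c i| ≤ θhi) (hcoeflo : ∀ i ∈ L, θlo < |c i|)
    (hφbig : ∀ i ∈ L, 2*nj ≤ κ i) :
    ‖∑ i ∈ L, c i • x (κ i)‖ ≤ 10*ρ*(∑ i ∈ L, |c i|) + 2*θhi*(nj:ℝ) := by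
  classical
  rcases eq_or_lt_of_le hθhi0 with hθz | hθpos
  · have hLe : L = ∅ := by
      refine Finset.eq_empty_of_forall_notMem fun i hi => ?_
      have h1 := hcoefhi i hi
      have h2 := hcoeflo i hi
      rw [← hθz] at h1
      have := abs_nonneg (c i)
      linarith
    subst hLe
    simp [← hθz]
  set Lk : ℕ → Finset ℕ :=
    fun k => L.filter (fun i => θhi/2^(k+1) < |c i| ∧ |c i| ≤ θhi/2^k) with hLk
  have hcover : L = (Finset.range K).biUnion Lk := by
    ext i
    constructor
    · intro hi
      have hhi := hcoefhi i hi
      have hlo := hcoeflo i hi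
      set P : ℕ → Prop := fun k => |c i| ≤ θhi / 2^k with hPdef
      have hP0 : P 0 := by simp only [hPdef, pow_zero]; simpa using hhi
      set k := Nat.findGreatest P K with hkdef
      have hPk : P k := Nat.findGreatest_spec (Nat.zero_le K) hP0
      have hkK : k ≤ K := Nat.findGreatest_le K
      have hkltK : k < K := by
        rcases lt_or_eq_of_le hkK with h | h
        · exact h
        · exfalso
          rw [h] at hPk
          have : θhi / 2^K ≤ θlo := hK
          have := hPk
          simp only [hPdef] at this
          linarith
      have hnPk1 : ¬ P (k+1) := Nat.findGreatest_is_greatest (Nat.lt_succ_self k) hkltK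
      simp only [hPdef, not_le] at hnPk1
      refine Finset.mem_biUnion.mpr ⟨k, Finset.mem_range.mpr hkltK, ?_⟩
      exact Finset.mem_filter.mpr ⟨hi, hnPk1, hPk⟩
    · intro hi
      obtain ⟨k, _, hik⟩ := Finset.mem_biUnion.mp hi
      exact (Finset.mem_filter.mp hik).1
  have hdisj : ((Finset.range K : Finset ℕ) : Set ℕ).PairwiseDisjoint Lk := by
    intro k hk k' hk' hkk'
    simp only [Function.onFun]
    rw [Finset.disjoint_left]
    intro i hik hik'
    have h1 := (Finset.mem_filter.mp hik).2
    have h2 := (Finset.mem_filter.mp hik').2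
    rcases Nat.lt_or_ge k k' with h | h
    · have h3 : θhi / 2^k' ≤ θhi / 2^(k+1) := by
        refine div_le_div_of_nonneg_left hθhi0 (by positivity) ?_
        exact pow_le_pow_right₀ (by norm_num) h
      linarith [h1.1, h2.2]
    · have hk'k : k' < k := lt_of_le_of_ne h (Ne.symm hkk')
      have h3 : θhi / 2^k ≤ θhi / 2^(k'+1) := by
        refine div_le_div_of_nonneg_left hθhi0 (by positivity) ?_
        exact pow_le_pow_right₀ (by norm_num) hk'k
      linarith [h1.2, h2.1]
  have hperk : ∀ k ∈ Finset.range K, ‖∑ i ∈ Lk k, c i • x (κ i)‖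
      ≤ 10*ρ*(∑ i ∈ Lk k, |c i|) + (nj:ℝ) * (θhi/2^k) := by
    intro k _
    set t : ℝ := θhi/2^k with ht
    have htpos : 0 < t := by positivity
    have hLkL : Lk k ⊆ L := Finset.filter_subset _ _
    have hmass_lo : ∀ i ∈ Lk k, t/2 < |c i| := by
      intro i hi
      have := (Finset.mem_filter.mp hi).2.1
      have hre : θhi / 2^(k+1) = t/2 := by
        rw [ht, pow_succ]
        ring
      linarith [hre ▸ this]
    have hmass_hi : ∀ i ∈ Lk k, |c i| ≤ t := fun i hi => (Finset.mem_filter.mp hi).2.2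
    have hsum_nonneg : (0:ℝ) ≤ ∑ i ∈ Lk k, |c i| :=
      Finset.sum_nonneg fun i _ => abs_nonneg _
    by_cases hcard : (Lk k).card < nj
    · have h1 : ‖∑ i ∈ Lk k, c i • x (κ i)‖ ≤ ∑ i ∈ Lk k, |c i| :=
        mass_bound hnorm c κ (Lk k)
      have h2 : ∑ i ∈ Lk k, |c i| ≤ (Lk k).card • t :=
        Finset.sum_le_card_nsmul _ _ _ fun i hi => hmass_hi i hi
      have h3 : ((Lk k).card : ℝ) * t ≤ (nj:ℝ) * t := by
        refine mul_le_mul_of_nonneg_right ?_ (le_of_lt htpos)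
        exact_mod_cast le_of_lt hcard
      rw [nsmul_eq_mul] at h2
      have h4 : (0:ℝ) ≤ 10*ρ*(∑ i ∈ Lk k, |c i|) := by positivity
      linarith
    · push_neg at hcard
      obtain ⟨Ps, hPs1, hPs2, hPs3⟩ :=
        exists_partition nj (by omega) (Lk k).card (Lk k) le_rfl hcard
      have hstep : ∀ B ∈ Ps, ‖∑ i ∈ B, c i • x (κ i)‖ ≤ 10*ρ*(∑ i ∈ B, |c i|) := by
        intro B hB
        have hBsub : B ⊆ Lk k := hPs1 ▸ Finset.subset_biUnion_of_mem id hB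
        have hBcard := hPs2 B hB
        have hbb := blockBound hsp hwn hεt c κ hκ t htpos nj B hBcard.2
          (fun i hi => hφbig i (hLkL (hBsub hi)))
          (fun i hi => hmass_hi i (hBsub hi))
        have hBmass : (nj:ℝ) * (t/2) ≤ ∑ i ∈ B, |c i| := by
          have h1 : ∀ i ∈ B, t/2 ≤ |c i| := fun i hi => le_of_lt (hmass_lo i (hBsub hi))
          have h2 : (B.card : ℝ) * (t/2) ≤ ∑ i ∈ B, |c i| := by
            have := Finset.card_nsmul_le_sum B (fun i => |c i|) (t/2) h1
            rw [nsmul_eq_mul] at this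
            exact this
          have h3 : (nj:ℝ) ≤ B.card := by exact_mod_cast hBcard.1
          nlinarith
        calc ‖∑ i ∈ B, c i • x (κ i)‖ ≤ t * (2 * fm xt (2*nj) + ε (2*nj)) := hbb
          _ ≤ t * (2 * (2*ρ*nj) + ρ*nj) := by
              refine mul_le_mul_of_nonneg_left ?_ (le_of_lt htpos)
              linarith
          _ = 10*ρ*((nj:ℝ) * (t/2)) := by ring
          _ ≤ 10*ρ*(∑ i ∈ B, |c i|) := by
              refine mul_le_mul_of_nonneg_left hBmass (by positivity)
      calc ‖∑ i ∈ Lk k, c i • x (κ i)‖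
          = ‖∑ B ∈ Ps, ∑ i ∈ B, c i • x (κ i)‖ := by
            rw [hPs1]
            rw [Finset.sum_biUnion hPs3]
            rfl
        _ ≤ ∑ B ∈ Ps, ‖∑ i ∈ B, c i • x (κ i)‖ := norm_sum_le _ _
        _ ≤ ∑ B ∈ Ps, 10*ρ*(∑ i ∈ B, |c i|) := Finset.sum_le_sum hstep
        _ = 10*ρ*(∑ i ∈ Lk k, |c i|) := by
            rw [← Finset.mul_sum]
            congr 1
            rw [hPs1, Finset.sum_biUnion hPs3]
            rfl
        _ ≤ 10*ρ*(∑ i ∈ Lk k, |c i|) + (nj:ℝ) * (θhi/2^k) := by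
            have : (0:ℝ) ≤ (nj:ℝ) * (θhi/2^k) := by positivity
            linarith
  calc ‖∑ i ∈ L, c i • x (κ i)‖
      = ‖∑ k ∈ Finset.range K, ∑ i ∈ Lk k, c i • x (κ i)‖ := by
        rw [hcover, Finset.sum_biUnion hdisj]
    _ ≤ ∑ k ∈ Finset.range K, ‖∑ i ∈ Lk k, c i • x (κ i)‖ := norm_sum_le _ _
    _ ≤ ∑ k ∈ Finset.range K, (10*ρ*(∑ i ∈ Lk k, |c i|) + (nj:ℝ) * (θhi/2^k)) :=
        Finset.sum_le_sum hperk
    _ = 10*ρ*(∑ i ∈ L, |c i|) + (nj:ℝ) * θhi * ∑ k ∈ Finset.range K, (1/2:ℝ)^k := by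
        rw [Finset.sum_add_distrib, ← Finset.mul_sum, ← Finset.mul_sum]
        congr 1
        · congr 1
          rw [hcover, Finset.sum_biUnion hdisj]
        · rw [Finset.mul_sum, Finset.mul_sum]
          refine Finset.sum_congr rfl fun k _ => ?_
          rw [div_eq_mul_inv, one_div, inv_pow]
          ring
    _ ≤ 10*ρ*(∑ i ∈ L, |c i|) + (nj:ℝ) * θhi * 2 := by
        refine add_le_add le_rfl ?_
        refine mul_le_mul_of_nonneg_left (sum_geometric_two_le K) ?_
        positivity
    _ = 10*ρ*(∑ i ∈ L, |c i|) + 2*θhi*(nj:ℝ) := by ring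

end SM2





end St18

open St18 in
set_option maxHeartbeats 2000000 in
/-- **Lemma 5.3.** Let `(x_i)` be a normalized weakly null basic sequence whose
spreading model is not equivalent to the unit vector basis of `ℓ₁`.  Then for every
`(δ_n)_{n ≥ 2} ⊆ (0,1)` there are a subsequence `(x_{m_i})`, integers
`M_1 < M_2 < ⋯` and `δ_1 > 0` such that for all finitely supported scalars `(a_i)`,
`‖∑ a_i x_{m_i}‖ ≤ sup_n δ_n ‖(a_i)‖_{ℓ₁(𝒢_n)}` with `𝒢_n = {G : |G| ≤ M_n}`. -/
theorem statement18 {X Y : Type*} [NormedAddCommGroup X] [NormedSpace ℝ X] [CompleteSpace X]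
    [NormedAddCommGroup Y] [NormedSpace ℝ Y]
    (x : ℕ → X) (hxnorm : IsNormalizedSeq x) (hxwn : IsWeaklyNull x) (hxbasic : IsBasicSeq x)
    (xt : ℕ → Y) (hsm : IsSpreadingModelOf x xt) (hne1 : ¬ EquivToLpBasis 1 xt)
    (δ : ℕ → ℝ) (hδ : ∀ n, 2 ≤ n → δ n ∈ Set.Ioo (0 : ℝ) 1) :
    ∃ φ : ℕ → ℕ, StrictMono φ ∧ ∃ M : ℕ → ℕ, StrictMono M ∧ ∃ δ₁ : ℝ, 0 < δ₁ ∧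
      ∀ a : ℕ →₀ ℝ,
        ‖∑ i ∈ a.support, a i • x (φ i)‖ ≤
          sSup {r | ∃ n : ℕ, 1 ≤ n ∧
            r = (if n = 1 then δ₁ else δ n) * ell1G (M n) a} := by
  classical
  obtain ⟨hxtbasic, ε, hεpos, hεanti, hεt, hsp'⟩ := hsm
  have hsp : SP x xt ε := hsp'
  have hgood : ∀ ρ : ℝ, 0 < ρ → ∀ N : ℕ, ∃ n : ℕ,
      N ≤ n ∧ 1 ≤ n ∧ fm xt n ≤ ρ * n ∧ ε n ≤ ρ * n :=
    fun ρ hρ N => exists_good hsp hxwn hεt hεanti hεpos hxnorm hne1 ρ hρ N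
  choose gf hgN hg1 hgfm hgε using hgood
  set ρf : ℕ → ℝ := fun j => δ j / (30 * 2^j) with hρf
  have hρfpos : ∀ j, 2 ≤ j → 0 < ρf j := by
    intro j hj
    have := (hδ j hj).1
    rw [hρf]
    positivity
  set nn : ℕ → ℕ := fun j => Nat.rec (gf (ρf 2) (hρfpos 2 le_rfl) 1)
      (fun j prev => gf (ρf (j+3)) (hρfpos (j+3) (by omega)) (prev+1)) j with hnn
  have hnmono : StrictMono nn := by
    refine strictMono_nat_of_lt_succ fun j => ?_
    have h1 : nn j + 1 ≤ nn (j+1) := hgN (ρf (j+3)) (hρfpos (j+3) (by omega)) (nn j + 1)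
    omega
  have hn1 : ∀ j, 1 ≤ nn j := by
    intro j
    cases j with
    | zero => exact hg1 (ρf 2) (hρfpos 2 le_rfl) 1
    | succ j => exact hg1 (ρf (j+3)) (hρfpos (j+3) (by omega)) (nn j + 1)
  have hnfm : ∀ j, fm xt (nn j) ≤ ρf (j+2) * nn j := by
    intro j
    cases j with
    | zero => exact hgfm (ρf 2) (hρfpos 2 le_rfl) 1
    | succ j => exact hgfm (ρf (j+3)) (hρfpos (j+3) (by omega)) (nn j + 1)
  have hnε : ∀ j, ε (nn j) ≤ ρf (j+2) * nn j := by
    intro j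
    cases j with
    | zero => exact hgε (ρf 2) (hρfpos 2 le_rfl) 1
    | succ j => exact hgε (ρf (j+3)) (hρfpos (j+3) (by omega)) (nn j + 1)
  set φ : ℕ → ℕ := fun i => 2 * nn i + i with hφ
  have hφmono : StrictMono φ := by
    intro i j hij
    have := hnmono hij
    simp only [hφ]
    omega
  set needC : ℕ → ℕ := fun j => ⌈(6 * ((nn (j-2) : ℝ) + j) * 2^j) / δ j⌉₊ + 1 with hneedC
  set M : ℕ → ℕ := fun j => Nat.rec 1 (fun j prev =>
      if j = 0 then needC 2 + 2 else prev * (max 2 (needC (j+2) / prev + 1))) j with hM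
  have hM0 : M 0 = 1 := rfl
  have hM1 : M 1 = needC 2 + 2 := rfl
  have hMs : ∀ j, 1 ≤ j → M (j+1) = M j * (max 2 (needC (j+2) / M j + 1)) := by
    intro j hj
    have hred : M (j+1) = if j = 0 then needC 2 + 2
        else M j * (max 2 (needC (j+2) / M j + 1)) := rfl
    rw [hred, if_neg (by omega)]
  have hMpos : ∀ j, 1 ≤ M j := by
    intro j
    induction j with
    | zero => exact le_rfl
    | succ j ih =>
      cases Nat.eq_zero_or_pos j with
      | inl h => subst h; show 1 ≤ M 1; rw [hM1]; omega
      | inr h =>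
        rw [hMs j h]
        have h2 : 2 ≤ max 2 (needC (j+2) / M j + 1) := le_max_left _ _
        nlinarith
  have hMmono : StrictMono M := by
    refine strictMono_nat_of_lt_succ fun j => ?_
    cases Nat.eq_zero_or_pos j with
    | inl h => subst h; show M 0 < M 1; rw [hM0, hM1]; omega
    | inr h =>
      rw [hMs j h]
      have h2 : 2 ≤ max 2 (needC (j+2) / M j + 1) := le_max_left _ _
      have h3 := hMpos j
      nlinarith
  have hMge : ∀ j, j + 1 ≤ M j := by
    intro j
    induction j with
    | zero => omega
    | succ j ih =>
      have h2 : M j < M (j+1) := hMmono (by omega : j < j+1)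
      omega
  have hMneed : ∀ j, 2 ≤ j → needC j ≤ M (j-1) := by
    intro j hj
    rcases Nat.lt_or_ge j 3 with h3 | h3
    · have hj2 : j = 2 := by omega
      subst hj2
      simp only [hM1]
      omega
    · obtain ⟨t, rfl⟩ : ∃ t, j = t + 3 := ⟨j - 3, by omega⟩
      have hstep := hMs (t+1) (by omega)
      rw [show t+1+2 = t+3 by omega] at hstep
      have hsub : t + 3 - 1 = t + 2 := by omega
      rw [hsub, hstep]
      have hkey : needC (t+3) < M (t+1) * (needC (t+3) / M (t+1) + 1) := by
        exact Nat.lt_mul_div_succ _ (hMpos (t+1))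
      have h4 : M (t+1) * (needC ((t+1)+2) / M (t+1) + 1)
          ≤ M (t+1) * (max 2 (needC ((t+1)+2) / M (t+1) + 1)) :=
        Nat.mul_le_mul_left _ (le_max_right _ _)
      have h5 : (t+1)+2 = t+3 := by omega
      rw [h5] at h4
      omega
  refine ⟨φ, hφmono, M, hMmono, 2, by norm_num, ?_⟩
  intro a
  set S : Set ℝ := {r | ∃ n : ℕ, 1 ≤ n ∧
      r = (if n = 1 then (2:ℝ) else δ n) * ell1G (M n) a} with hSdef
  have hScoef : ∀ n : ℕ, 1 ≤ n → 0 ≤ (if n = 1 then (2:ℝ) else δ n) ∧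
      (if n = 1 then (2:ℝ) else δ n) ≤ 2 := by
    intro n hn
    by_cases h : n = 1
    · simp [h]
    · have h2 : 2 ≤ n := by omega
      have := hδ n h2
      rw [if_neg h]
      constructor
      · exact le_of_lt this.1
      · linarith [this.2]
  have hSbdd : BddAbove S := by
    refine ⟨2 * ∑ i ∈ a.support, |a i|, fun r hr => ?_⟩
    obtain ⟨n, hn, rfl⟩ := hr
    have h1 := hScoef n hn
    have h2 := ell1G_le_l1 (M n) a
    have h3 := ell1G_nonneg (M n) a
    nlinarith
  have hSmem : ∀ n : ℕ, 1 ≤ n →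
      ((if n = 1 then (2:ℝ) else δ n) * ell1G (M n) a) ∈ S :=
    fun n hn => ⟨n, hn, rfl⟩
  by_cases ha : a.support = ∅
  · rw [ha, Finset.sum_empty, norm_zero]
    refine le_trans ?_ (le_csSup hSbdd (hSmem 1 le_rfl))
    simp only [if_pos rfl]
    exact mul_nonneg (by norm_num) (ell1G_nonneg (M 1) a)
  -- main case
  have hane : a.support.Nonempty := Finset.nonempty_of_ne_empty ha
  set e : ℕ → ℝ := fun j => ell1G (M j) a with he
  set θ : ℕ → ℝ := fun j => e j / M j with hθ
  have hepos : ∀ j, 0 ≤ e j := fun j => ell1G_nonneg (M j) a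
  have hemono : ∀ {j j'}, j ≤ j' → e j ≤ e j' :=
    fun h => ell1G_mono a (hMmono.le_iff_le.mpr h)
  have hθnn : ∀ j, 0 ≤ θ j := by
    intro j
    rw [hθ]
    have := hepos j
    positivity
  set D : ℕ → Finset ℕ := fun j => a.support.filter (fun i => θ j < |a i|) with hD
  have hDsupp : ∀ j, D j ⊆ a.support := fun j => Finset.filter_subset _ _
  have hDcard : ∀ j, (D j).card ≤ M j := by
    intro j
    refine count_big a (M j) (hMpos j) (θ j) ?_
    rw [hθ]
    have hMj : (0:ℝ) < M j := by exact_mod_cast hMpos j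
    rw [div_mul_cancel₀ _ (ne_of_gt hMj)]
  have hDmass : ∀ j, ∑ i ∈ D j, |a i| ≤ e j := fun j => ell1G_ge (M j) a (D j) (hDcard j)
  have hθmono : ∀ j, 1 ≤ j → θ (j+1) ≤ θ j := by
    intro j hj
    have hMj1 : M (j+1) = M j * (max 2 (needC (j+2) / M j + 1)) := hMs j hj
    set m : ℕ := max 2 (needC (j+2) / M j + 1) with hm
    have hm2 : 2 ≤ m := le_max_left _ _
    have hE : e (j+1) ≤ (m:ℝ) * e j := by
      simp only [he]
      rw [hMj1, mul_comm (M j) m]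
      exact ell1G_mul a (M j) m
    have hMjpos : (0:ℝ) < M j := by exact_mod_cast hMpos j
    have hmpos : (0:ℝ) < m := by exact_mod_cast (by omega : 0 < m)
    simp only [hθ]
    rw [hMj1]
    push_cast
    rw [div_le_div_iff₀ (by positivity) hMjpos]
    have h1 := mul_le_mul_of_nonneg_right hE (le_of_lt hMjpos)
    nlinarith
  have hθchain : ∀ {j j'}, 1 ≤ j → j ≤ j' → θ j' ≤ θ j := by
    intro j j' hj hjj'
    induction j' with
    | zero => omega
    | succ j' ih =>
      rcases Nat.lt_or_ge j (j'+1) with h | h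
      · exact le_trans (hθmono j' (by omega)) (ih (by omega))
      · have : j = j' + 1 := by omega
        subst this
        exact le_rfl
  have hDchain : ∀ {j j'}, 1 ≤ j → j ≤ j' → D j ⊆ D j' := by
    intro j j' hj hjj' i hi
    have h1 := Finset.mem_filter.mp hi
    exact Finset.mem_filter.mpr ⟨h1.1, lt_of_le_of_lt (hθchain hj hjj') h1.2⟩
  -- choice of J
  obtain ⟨J, hJ2, hDJ⟩ : ∃ J, 2 ≤ J ∧ D J = a.support := by
    set l1 : ℝ := ∑ i ∈ a.support, |a i| with hl1
    set amin : ℝ := a.support.inf' hane (fun i => |a i|) with hamin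
    have haminpos : 0 < amin := by
      rw [hamin, Finset.lt_inf'_iff]
      intro i hi
      exact abs_pos.mpr (Finsupp.mem_support_iff.mp hi)
    set J : ℕ := max 2 (⌈l1 / amin⌉₊ + 1) with hJ
    have hJ2 : 2 ≤ J := le_max_left _ _
    have hJM : l1 / amin < (M J : ℝ) := by
      have h1 : (l1 / amin) ≤ (⌈l1 / amin⌉₊ : ℝ) := Nat.le_ceil _
      have h2 : (⌈l1 / amin⌉₊ : ℝ) + 1 ≤ (J:ℝ) := by
        exact_mod_cast le_max_right 2 (⌈l1 / amin⌉₊ + 1)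
      have h3 : (J:ℝ) ≤ (M J : ℝ) := by
        have := hMge J
        exact_mod_cast (by omega : J ≤ M J)
      linarith
    have hMJpos : (0:ℝ) < M J := by exact_mod_cast hMpos J
    have hθJ : θ J < amin := by
      have h1 : e J ≤ l1 := ell1G_le_l1 (M J) a
      have h2 : θ J ≤ l1 / M J := by
        simp only [hθ]
        gcongr
      have h3 : l1 / M J < amin := by
        rw [div_lt_iff₀ hMJpos]
        rw [div_lt_iff₀ haminpos] at hJM
        linarith
      linarith
    refine ⟨J, hJ2, ?_⟩
    refine Finset.Subset.antisymm (hDsupp J) fun i hi => ?_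
    simp only [hD]
    refine Finset.mem_filter.mpr ⟨hi, ?_⟩
    have h4 : amin ≤ |a i| := by
      rw [hamin]
      exact Finset.inf'_le _ hi
    linarith
  set Lv : ℕ → Finset ℕ := fun j => if j = 1 then D 1 else D j \ D (j-1) with hLv
  have hLvD : ∀ j, Lv j ⊆ D j := by
    intro j
    rw [hLv]
    by_cases h : j = 1
    · simp [h]
    · simp only [if_neg h]
      exact Finset.sdiff_subset
  have hLvsupp : ∀ j, Lv j ⊆ a.support := fun j => (hLvD j).trans (hDsupp j)
  have hLvhi : ∀ j, 2 ≤ j → ∀ i ∈ Lv j, |a i| ≤ θ (j-1) := by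
    intro j hj i hi
    have hisupp : i ∈ a.support := hLvsupp j hi
    simp only [hLv] at hi
    rw [if_neg (show j ≠ 1 by omega)] at hi
    have h2 := (Finset.mem_sdiff.mp hi).2
    by_contra hcon
    push_neg at hcon
    refine h2 ?_
    simp only [hD]
    exact Finset.mem_filter.mpr ⟨hisupp, hcon⟩
  have hLvlo : ∀ j, 2 ≤ j → ∀ i ∈ Lv j, θ j < |a i| :=
    fun j hj i hi => (Finset.mem_filter.mp (hLvD j hi)).2
  have hunion : (Finset.Icc 1 J).biUnion Lv = D J := by
    have key : ∀ J', 1 ≤ J' → (Finset.Icc 1 J').biUnion Lv = D J' := by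
      intro J'
      induction J' with
      | zero => omega
      | succ J' ih =>
        intro _
        rcases Nat.eq_zero_or_pos J' with h0 | hpos
        · subst h0
          rw [Finset.Icc_self, Finset.singleton_biUnion]
          simp only [hLv, if_pos rfl]
        · have hstep : Finset.Icc 1 (J'+1) = insert (J'+1) (Finset.Icc 1 J') :=
            (Finset.insert_Icc_right_eq_Icc_add_one (by omega)).symm
          rw [hstep, Finset.biUnion_insert, ih hpos]
          simp only [hLv, if_neg (show J'+1 ≠ 1 by omega)]
          rw [show J'+1-1 = J' by omega]
          have hsub := hDchain (j := J') (j' := J'+1) hpos (by omega)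
          ext i
          simp only [Finset.mem_union, Finset.mem_sdiff]
          constructor
          · rintro (⟨h1, _⟩ | h1)
            · exact h1
            · exact hsub h1
          · intro h1
            by_cases h2 : i ∈ D J'
            · exact Or.inr h2
            · exact Or.inl ⟨h1, h2⟩
    exact key J (by omega)
  have hdisjLv : ((Finset.Icc 1 J : Finset ℕ) : Set ℕ).PairwiseDisjoint Lv := by
    have key : ∀ j j', 1 ≤ j → j < j' → Disjoint (Lv j) (Lv j') := by
      intro j j' hj hjj'
      rw [Finset.disjoint_left]
      intro i hij hij'
      have h1 : i ∈ D (j'-1) := hDchain hj (by omega) (hLvD j hij)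
      simp only [hLv] at hij'
      rw [if_neg (show j' ≠ 1 by omega)] at hij'
      exact (Finset.mem_sdiff.mp hij').2 h1
    intro j hj j' hj' hne
    simp only [Finset.coe_Icc, Set.mem_Icc] at hj hj'
    simp only [Function.onFun]
    rcases Nat.lt_or_ge j j' with h | h
    · exact key j j' hj.1 h
    · have h2 : j' < j := by omega
      exact (key j' j hj'.1 h2).symm
  -- the sum decomposition
  have hdecomp : ∑ i ∈ a.support, a i • x (φ i)
      = ∑ j ∈ Finset.Icc 1 J, ∑ i ∈ Lv j, a i • x (φ i) := by
    rw [← hDJ, ← hunion, Finset.sum_biUnion hdisjLv]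
  -- per-level estimates
  have hlevel : ∀ j ∈ Finset.Icc 1 J, ‖∑ i ∈ Lv j, a i • x (φ i)‖
      ≤ (1/2:ℝ)^j * ((if j = 1 then (2:ℝ) else δ j) * e j) := by
    intro j hjmem
    have hjIcc := Finset.mem_Icc.mp hjmem
    by_cases hj1 : j = 1
    · subst hj1
      rw [if_pos rfl]
      have h1 := mass_bound (x := x) hxnorm (fun i => a i) φ (Lv 1)
      have hLv1 : Lv 1 = D 1 := by simp only [hLv, if_pos rfl]
      have h2 : ∑ i ∈ Lv 1, |a i| ≤ e 1 := by
        rw [hLv1]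
        exact hDmass 1
      have h3 : (1/2:ℝ)^1 * (2 * e 1) = e 1 := by ring
      rw [h3]
      exact le_trans h1 h2
    · have hj2 : 2 ≤ j := by omega
      rw [if_neg hj1]
      set nj : ℕ := nn (j-2) with hnjdef
      have hnj1 : 1 ≤ nj := hn1 _
      have hnjcast : (0:ℝ) < nj := by exact_mod_cast hnj1
      have hρjpos : 0 < ρf j := hρfpos j hj2
      have hfmnj : fm xt nj ≤ ρf j * nj := by
        have h := hnfm (j-2)
        rw [show j-2+2 = j by omega] at h
        exact h
      have hεnj : ε nj ≤ ρf j * nj := by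
        have h := hnε (j-2)
        rw [show j-2+2 = j by omega] at h
        exact h
      have hfm2 : fm xt (2*nj) ≤ 2*(ρf j)*nj := by
        have h := fm_mul (x := x) (ε := ε) hsp hεt 2 nj
        push_cast at h
        nlinarith
      have hε2 : ε (2*nj) ≤ ρf j * nj := le_trans (hεanti (by omega)) hεnj
      have hstepM : M j = M (j-1) * (max 2 (needC (j-1+2) / M (j-1) + 1)) := by
        have h := hMs (j-1) (by omega)
        rw [show j-1+1 = j by omega] at h
        exact h
      set mm : ℕ := max 2 (needC (j-1+2) / M (j-1) + 1) with hmm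
      have hmm2 : 2 ≤ mm := le_max_left _ _
      have hM1pos : (0:ℝ) < M (j-1) := by exact_mod_cast hMpos (j-1)
      have hmmpos : (0:ℝ) < mm := by exact_mod_cast (by omega : 0 < mm)
      have hKbound : θ (j-1) / 2^mm ≤ θ j := by
        have hle1 : (mm:ℝ) ≤ 2^mm := by exact_mod_cast (Nat.lt_two_pow_self (n := mm)).le
        have hMexp : (M j : ℝ) = M (j-1) * mm := by exact_mod_cast hstepM
        have hE : e (j-1) ≤ e j := hemono (by omega)
        simp only [hθ]
        rw [hMexp, div_div]
        have hstep1 : e (j-1) / ((M (j-1) : ℝ) * 2^mm) ≤ e (j-1) / ((M (j-1):ℝ) * mm) := by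
          refine div_le_div_of_nonneg_left (hepos _) (by positivity) ?_
          nlinarith
        refine le_trans hstep1 ?_
        gcongr
      set Lm : Finset ℕ := (Lv j).filter (fun i => 2*nj ≤ φ i) with hLmdef
      set Lr : Finset ℕ := (Lv j).filter (fun i => ¬ 2*nj ≤ φ i) with hLrdef
      have hsplitsum : ∑ i ∈ Lv j, a i • x (φ i)
          = ∑ i ∈ Lm, a i • x (φ i) + ∑ i ∈ Lr, a i • x (φ i) :=
        (Finset.sum_filter_add_sum_filter_not (Lv j) _ _).symm
      have hLrsub : Lr ⊆ Finset.range j := by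
        intro i hi
        simp only [hLrdef, Finset.mem_filter, not_le] at hi
        refine Finset.mem_range.mpr ?_
        have h2 : φ i < 2*nj := hi.2
        by_contra hcon
        push_neg at hcon
        have h3 : nn (j-2) ≤ nn i := hnmono.monotone (by omega)
        have h4 : 2*nj ≤ φ i := by
          simp only [hφ]
          omega
        omega
      have hLrcard : Lr.card ≤ j :=
        le_trans (Finset.card_le_card hLrsub) (le_of_eq (Finset.card_range j))
      have hLrcoef : ∀ i ∈ Lr, |a i| ≤ θ (j-1) :=
        fun i hi => hLvhi j hj2 i (Finset.filter_subset _ _ hi)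
      have hLrnorm : ‖∑ i ∈ Lr, a i • x (φ i)‖ ≤ (j:ℝ) * θ (j-1) := by
        refine le_trans (mass_bound (x := x) hxnorm _ φ Lr) ?_
        have h1 : ∑ i ∈ Lr, |a i| ≤ Lr.card • θ (j-1) :=
          Finset.sum_le_card_nsmul _ _ _ hLrcoef
        rw [nsmul_eq_mul] at h1
        have h2 : (Lr.card : ℝ) ≤ j := by exact_mod_cast hLrcard
        nlinarith [hθnn (j-1)]
      have hLmcoefhi : ∀ i ∈ Lm, |a i| ≤ θ (j-1) :=
        fun i hi => hLvhi j hj2 i (Finset.filter_subset _ _ hi)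
      have hLmcoeflo : ∀ i ∈ Lm, θ j < |a i| :=
        fun i hi => hLvlo j hj2 i (Finset.filter_subset _ _ hi)
      have hLmφ : ∀ i ∈ Lm, 2*nj ≤ φ i := fun i hi => (Finset.mem_filter.mp hi).2
      have hLmnorm := levelBound (x := x) (xt := xt) (ε := ε) hsp hxwn hεt hxnorm
        (fun i => a i) φ hφmono (ρf j) hρjpos nj hnj1 hfm2 hε2
        (θ (j-1)) (θ j) (hθnn j) (hθnn (j-1)) mm hKbound Lm hLmcoefhi hLmcoeflo hLmφ
      have hLm_l1 : ∑ i ∈ Lm, |a i| ≤ e j := by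
        refine le_trans ?_ (hDmass j)
        refine Finset.sum_le_sum_of_subset_of_nonneg ?_ (fun i _ _ => abs_nonneg _)
        exact (Finset.filter_subset _ _).trans (hLvD j)
      have hMneedj : (6*((nj:ℝ) + j) * 2^j) / δ j ≤ M (j-1) := by
        have h1 := hMneed j hj2
        have h2 : (6*((nn (j-2):ℝ) + j)*2^j)/δ j
            ≤ (⌈(6*((nn (j-2):ℝ) + j)*2^j)/δ j⌉₊ : ℝ) := Nat.le_ceil _
        have h3 : (needC j : ℝ) = (⌈(6*((nn (j-2):ℝ) + j)*2^j)/δ j⌉₊ : ℝ) + 1 := by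
          simp only [hneedC]
          push_cast
          ring
        have h4 : (needC j : ℝ) ≤ M (j-1) := by exact_mod_cast h1
        rw [hnjdef]
        linarith
      have hδj := hδ j hj2
      have h2jpos : (0:ℝ) < 2^j := by positivity
      have hs1 : (2*(nj:ℝ)+j) * (3 * 2^j) ≤ δ j * M (j-1) := by
        rw [div_le_iff₀ hδj.1] at hMneedj
        have hnj0 : (0:ℝ) ≤ nj := le_of_lt hnjcast
        have hj0 : (0:ℝ) ≤ j := Nat.cast_nonneg j
        nlinarith
      have hs2 : θ (j-1) * M (j-1) ≤ e j := by
        simp only [hθ]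
        rw [div_mul_cancel₀ _ (ne_of_gt hM1pos)]
        exact hemono (by omega)
      have hkey1 : (2*(nj:ℝ)+j) * θ (j-1) ≤ δ j * e j / (3*2^j) := by
        rw [le_div_iff₀ (by positivity)]
        have h1 := mul_le_mul_of_nonneg_right hs1 (hθnn (j-1))
        have h2 := mul_le_mul_of_nonneg_left hs2 (le_of_lt hδj.1)
        nlinarith
      have hkey2 : 10 * ρf j * (∑ i ∈ Lm, |a i|) ≤ δ j * e j / (3*2^j) := by
        have hρeq : 10 * ρf j = δ j / (3*2^j) := by
          simp only [hρf]
          field_simp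
          ring
        rw [hρeq, div_mul_eq_mul_div, div_le_div_iff₀ (by positivity) (by positivity)]
        have h1 := mul_le_mul_of_nonneg_left hLm_l1 (le_of_lt hδj.1)
        nlinarith
      calc ‖∑ i ∈ Lv j, a i • x (φ i)‖
          ≤ ‖∑ i ∈ Lm, a i • x (φ i)‖ + ‖∑ i ∈ Lr, a i • x (φ i)‖ := by
            rw [hsplitsum]
            exact norm_add_le _ _
        _ ≤ (10*(ρf j)*(∑ i ∈ Lm, |a i|) + 2*(θ (j-1))*(nj:ℝ)) + (j:ℝ)*θ (j-1) :=
            add_le_add hLmnorm hLrnorm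
        _ ≤ δ j * e j/(3*2^j) + δ j * e j/(3*2^j) := by
            have h1 : 2*(θ (j-1))*(nj:ℝ) + (j:ℝ)*θ (j-1) = (2*(nj:ℝ)+j) * θ (j-1) := by
              ring
            linarith
        _ ≤ (1/2:ℝ)^j * (δ j * e j) := by
            have hde : 0 ≤ δ j * e j := mul_nonneg (le_of_lt hδj.1) (hepos j)
            have hmerge : δ j * e j/(3*2^j) + δ j * e j/(3*2^j)
                = (2/3) * (δ j * e j / 2^j) := by
              field_simp
              ring
            have hpow : (1/2:ℝ)^j * (δ j * e j) = δ j * e j / 2^j := by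
              rw [one_div, inv_pow]
              ring
            rw [hmerge, hpow]
            have h0 : 0 ≤ δ j * e j / 2^j := div_nonneg hde (le_of_lt h2jpos)
            linarith
  -- conclusion
  have hfinal : ‖∑ i ∈ a.support, a i • x (φ i)‖
      ≤ ∑ j ∈ Finset.Icc 1 J, (1/2:ℝ)^j * ((if j = 1 then (2:ℝ) else δ j) * e j) := by
    rw [hdecomp]
    exact le_trans (norm_sum_le _ _) (Finset.sum_le_sum hlevel)
  set r : ℕ → ℝ := fun j => (if j = 1 then (2:ℝ) else δ j) * e j with hr
  have hrnn : ∀ j ∈ Finset.Icc 1 J, 0 ≤ r j := by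
    intro j hj
    have h1 := (hScoef j (Finset.mem_Icc.mp hj).1).1
    have h2 := hepos j
    exact mul_nonneg h1 h2
  have hIccne : (Finset.Icc 1 J).Nonempty := ⟨1, Finset.mem_Icc.mpr ⟨le_rfl, by omega⟩⟩
  obtain ⟨j₀, hj₀mem, hj₀⟩ := Finset.exists_mem_eq_sup' hIccne r
  have hRnn : 0 ≤ r j₀ := hrnn j₀ hj₀mem
  have hRS : r j₀ ∈ S := by
    simp only [hr, he]
    exact hSmem j₀ (Finset.mem_Icc.mp hj₀mem).1
  have hler : ∀ j ∈ Finset.Icc 1 J, r j ≤ r j₀ := by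
    intro j hj
    have h1 := Finset.le_sup' r hj
    rw [← hj₀]
    exact h1
  have hsumgeo : ∑ j ∈ Finset.Icc 1 J, (1/2:ℝ)^j ≤ 1 := by
    have h1 : ∑ j ∈ Finset.range (J+1), (1/2:ℝ)^j ≤ 2 := sum_geometric_two_le (J+1)
    have h2 : ∑ j ∈ Finset.range (J+1), (1/2:ℝ)^j
        = ∑ j ∈ Finset.Ico 0 1, (1/2:ℝ)^j + ∑ j ∈ Finset.Ico 1 (J+1), (1/2:ℝ)^j := by
      rw [Finset.range_eq_Ico]
      exact (Finset.sum_Ico_consecutive _ (Nat.zero_le 1) (by omega)).symm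
    have h3 : ∑ j ∈ Finset.Ico 0 1, (1/2:ℝ)^j = 1 := by simp
    have h4 : Finset.Ico 1 (J+1) = Finset.Icc 1 J := Finset.Ico_add_one_right_eq_Icc 1 J
    rw [h2, h3, h4] at h1
    linarith
  have hsumR : ∑ j ∈ Finset.Icc 1 J, (1/2:ℝ)^j * r j ≤ r j₀ := by
    calc ∑ j ∈ Finset.Icc 1 J, (1/2:ℝ)^j * r j
        ≤ ∑ j ∈ Finset.Icc 1 J, (1/2:ℝ)^j * r j₀ := by
          refine Finset.sum_le_sum fun j hj => ?_
          refine mul_le_mul_of_nonneg_left (hler j hj) (by positivity)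
      _ = (∑ j ∈ Finset.Icc 1 J, (1/2:ℝ)^j) * r j₀ := by rw [Finset.sum_mul]
      _ ≤ 1 * r j₀ := mul_le_mul_of_nonneg_right hsumgeo hRnn
      _ = r j₀ := one_mul _
  refine le_trans hfinal (le_trans ?_ (le_csSup hSbdd hRS))
  refine le_trans ?_ hsumR
  refine Finset.sum_le_sum fun j hj => ?_
  exact le_of_eq rfl


end
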